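/- arXiv:1408.6824 — 3 statements merged into one kernel-verified Lean document; each statement's English description precedes it below -/
import Mathlib

section
/- Let 𝒳 be a finite field with q elements (q a prime power), let 𝒴₁,…,𝒴_K be finite sets, and let (X,Y₁,…,Y_K) be a random vector with joint distribution P on 𝒳×𝒴₁×⋯×𝒴_K. For every ε>0 and δ>0 there exist positive integers t and m₀ such that for every integer m ≥ m₀, setting n = t·2^m, there exist a positive integer M, an encoder f : 𝒳ⁿ → Fin M, and decoders g_k : Fin M × 𝒴_kⁿ → 𝒳ⁿ for 1 ≤ k ≤ K, such that the rate R = (log M)/(n·log q) satisfies max_{1≤k≤K} H_q(X|Y_k) < R < max_{1≤k≤K} H_q(X|Y_k) + δ, and for every 1 ≤ k ≤ K the error probability Pr[X^{1:n} ≠ g_k(f(X^{1:n}), Y_k^{1:n})] < ε, where (X^{1:n}, Y₁^{1:n}, …, Y_K^{1:n}) denotes n i.i.d. copies of (X,Y₁,…,Y_K) (i.e., the n-fold product of P). -/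
open scoped BigOperators

/-- Shannon entropy (in nats) of a probability mass function on a finite type. -/
noncomputable def pmfEntropy {α : Type} [Fintype α] (Q : PMF α) : ℝ :=
  ∑ a, Real.negMulLog ((Q a).toReal)

open Classical in
/-- Probability of the event `E` under `n` i.i.d. copies of a distribution `P`
on a finite alphabet. -/
noncomputable def iidProb {α : Type} [Fintype α] (P : PMF α) (n : ℕ)
    (E : (Fin n → α) → Prop) : ℝ :=
  ∑ ω : Fin n → α, if E ω then ∏ i, (P (ω i)).toReal else 0

/-- Conditional entropy `H_q(X | Y_k)` (in base `q = |𝓧|`), computed as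
`(H(X, Y_k) - H(Y_k)) / log q` from the joint distribution `P` of
`(X, Y_1, …, Y_K)`. -/
noncomputable def condEntropyQ {𝓧 : Type} [Fintype 𝓧] {K : ℕ} {𝓨 : Fin K → Type}
    [∀ k, Fintype (𝓨 k)] (P : PMF (𝓧 × ∀ k, 𝓨 k)) (k : Fin K) : ℝ :=
  (pmfEntropy (P.map fun p => (p.1, p.2 k)) - pmfEntropy (P.map fun p => p.2 k)) /
    Real.log (Fintype.card 𝓧)

namespace USC

open Finset Real Classical

section Basic
variable {α β γ' : Type} [Fintype α] [Fintype β] [Fintype γ'] {p : α → ℝ}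

lemma sum_pi_prod {n : ℕ} (ψ : Fin n → α → ℝ) :
    ∑ ω : Fin n → α, ∏ i, ψ i (ω i) = ∏ i, ∑ a, ψ i a :=
  (Fintype.prod_sum fun i a => ψ i a).symm

variable {p : α → ℝ}

lemma sum_prod_p {n : ℕ} (hp1 : ∑ a, p a = 1) :
    ∑ ω : Fin n → α, ∏ i, p (ω i) = 1 := by
  rw [sum_pi_prod fun _ a => p a]
  simp [hp1]

lemma moment_aux (hp1 : ∑ a, p a = 1) {n : ℕ} (ψ : α → ℝ) (j : Fin n) :
    ∑ ω : Fin n → α, (∏ i, p (ω i)) * ψ (ω j) = ∑ a, p a * ψ a := by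
  have h1 : ∀ ω : Fin n → α, (∏ i, p (ω i)) * ψ (ω j)
      = ∏ i, (fun i a => p a * (if i = j then ψ a else 1)) i (ω i) := by
    intro ω
    rw [Finset.prod_mul_distrib]
    congr 1
    simp
  simp_rw [h1]
  rw [sum_pi_prod (fun i a => p a * if i = j then ψ a else 1)]
  rw [Finset.prod_eq_single j (fun i _ hij => by simp [hij, hp1]) (by simp)]
  simp

lemma moment_aux2 (hp1 : ∑ a, p a = 1) {n : ℕ} (ψ : α → ℝ) (j j' : Fin n) (hjj : j ≠ j') :
    ∑ ω : Fin n → α, (∏ i, p (ω i)) * (ψ (ω j) * ψ (ω j'))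
      = (∑ a, p a * ψ a) * (∑ a, p a * ψ a) := by
  have h1 : ∀ ω : Fin n → α, (∏ i, p (ω i)) * (ψ (ω j) * ψ (ω j'))
      = ∏ i, (fun i a => p a * ((if i = j then ψ a else 1) * (if i = j' then ψ a else 1))) i (ω i) := by
    intro ω
    simp_rw [← mul_assoc, Finset.prod_mul_distrib]
    simp [hjj, mul_assoc]
  simp_rw [h1]
  rw [sum_pi_prod (fun i a => p a * ((if i = j then ψ a else 1) * (if i = j' then ψ a else 1)))]
  have h2 : ∀ i : Fin n, (∑ a, p a * ((if i = j then ψ a else 1) * (if i = j' then ψ a else 1)))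
      = if i ∈ ({j, j'} : Finset (Fin n)) then ∑ a, p a * ψ a else 1 := by
    intro i
    by_cases h : i = j
    · subst h; simp [hjj, hp1]
    · by_cases h' : i = j'
      · subst h'; simp [h, hp1]
      · simp [h, h', hp1]
  simp_rw [h2]
  rw [Finset.prod_ite_mem, Finset.univ_inter, Finset.prod_const,
    Finset.card_pair hjj, sq]

lemma sum_centered_sq (hp1 : ∑ a, p a = 1) {n : ℕ} (φ : α → ℝ)
    (hmean : ∑ a, p a * φ a = 0) :
    ∑ ω : Fin n → α, (∏ i, p (ω i)) * (∑ j, φ (ω j)) ^ 2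
      = n * ∑ a, p a * φ a ^ 2 := by
  have h1 : ∀ ω : Fin n → α, (∏ i, p (ω i)) * (∑ j, φ (ω j)) ^ 2
      = ∑ j, ∑ j', (∏ i, p (ω i)) * (φ (ω j) * φ (ω j')) := by
    intro ω
    rw [sq, Finset.sum_mul_sum, Finset.mul_sum]
    exact Finset.sum_congr rfl fun j _ => by rw [Finset.mul_sum]
  simp_rw [h1]
  rw [Finset.sum_comm]
  have h2 : ∀ j : Fin n, (∑ ω : Fin n → α, ∑ j' : Fin n,
      (∏ i, p (ω i)) * (φ (ω j) * φ (ω j'))) = ∑ a, p a * φ a ^ 2 := by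
    intro j
    rw [Finset.sum_comm]
    have h3 : ∀ j' : Fin n, ∑ ω : Fin n → α, (∏ i, p (ω i)) * (φ (ω j) * φ (ω j'))
        = if j' = j then ∑ a, p a * φ a ^ 2 else 0 := by
      intro j'
      by_cases h : j' = j
      · subst h
        simp_rw [← sq]
        exact moment_aux hp1 (fun a => φ a ^ 2) j'
      · rw [moment_aux2 hp1 φ j j' (Ne.symm h), hmean, if_neg h, mul_zero]
    simp_rw [h3]
    simp
  simp_rw [h2]
  simp [Finset.sum_const, nsmul_eq_mul]

lemma chebyshev (hp0 : ∀ a, 0 ≤ p a) (hp1 : ∑ a, p a = 1) {n : ℕ} (hn : 0 < n)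
    (φ : α → ℝ) {γ : ℝ} (hγ : 0 < γ) :
    ∑ ω : Fin n → α, (if (n : ℝ) * (∑ a, p a * φ a) + n * γ < ∑ j, φ (ω j)
        then ∏ i, p (ω i) else 0)
      ≤ (∑ a, p a * (φ a - ∑ b, p b * φ b) ^ 2) / (n * γ ^ 2) := by
  set μ := ∑ b, p b * φ b with hμ
  set φ' : α → ℝ := fun a => φ a - μ with hφ'
  have hmean : ∑ a, p a * φ' a = 0 := by
    simp only [hφ', mul_sub]
    rw [Finset.sum_sub_distrib, ← Finset.sum_mul, hp1, one_mul, sub_self]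
  have key : ∑ ω : Fin n → α, (∏ i, p (ω i)) * (∑ j, φ' (ω j)) ^ 2
      = n * ∑ a, p a * φ' a ^ 2 := sum_centered_sq hp1 φ' hmean
  have hnγ : (0:ℝ) < (n : ℝ) * γ := by positivity
  have step : ∀ ω : Fin n → α,
      (if (n : ℝ) * μ + n * γ < ∑ j, φ (ω j) then ∏ i, p (ω i) else 0)
        ≤ (∏ i, p (ω i)) * (∑ j, φ' (ω j)) ^ 2 / ((n : ℝ) * γ) ^ 2 := by
    intro ω
    have hw : 0 ≤ ∏ i, p (ω i) := Finset.prod_nonneg fun i _ => hp0 _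
    split_ifs with h
    · have hS : (n : ℝ) * γ < ∑ j, φ' (ω j) := by
        simp only [hφ', Finset.sum_sub_distrib, Finset.sum_const, Finset.card_univ,
          Fintype.card_fin, nsmul_eq_mul]
        linarith
      have h1 : ((n : ℝ) * γ) ^ 2 ≤ (∑ j, φ' (ω j)) ^ 2 := by
        apply sq_le_sq' <;> nlinarith
      rw [le_div_iff₀ (by positivity)]
      nlinarith [sq_nonneg ((n:ℝ)*γ)]
    · positivity
  calc ∑ ω : Fin n → α, (if (n : ℝ) * μ + n * γ < ∑ j, φ (ω j) then ∏ i, p (ω i) else 0)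
      ≤ ∑ ω : Fin n → α, (∏ i, p (ω i)) * (∑ j, φ' (ω j)) ^ 2 / ((n : ℝ) * γ) ^ 2 :=
        Finset.sum_le_sum fun ω _ => step ω
    _ = (n * ∑ a, p a * φ' a ^ 2) / ((n : ℝ) * γ) ^ 2 := by
        rw [← Finset.sum_div, key]
    _ = (∑ a, p a * φ' a ^ 2) / (n * γ ^ 2) := by
        rw [mul_pow]
        rw [div_eq_div_iff (by positivity) (by positivity)]
        ring
lemma pmf_sum_one (P : PMF α) : ∑ a, (P a).toReal = 1 := by
  rw [← ENNReal.toReal_sum (fun a _ => P.apply_ne_top a), ← tsum_fintype (L := SummationFilter.unconditional _), P.tsum_coe,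
    ENNReal.toReal_one]

lemma map_toReal (P : PMF α) (g : α → β) (b : β) :
    ((P.map g) b).toReal = ∑ a, if g a = b then (P a).toReal else 0 := by
  rw [PMF.map_apply, tsum_fintype, ENNReal.toReal_sum (fun a _ => by
    split_ifs
    · exact P.apply_ne_top a
    · exact ENNReal.zero_ne_top)]
  refine Finset.sum_congr rfl fun a _ => ?_
  rw [apply_ite ENNReal.toReal, ENNReal.toReal_zero]
  simp [eq_comm]

lemma group_sum (P : PMF α) (g : α → β) (F : β → ℝ) :
    ∑ b, ((P.map g) b).toReal * F b = ∑ a, (P a).toReal * F (g a) := by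
  simp_rw [map_toReal, Finset.sum_mul]
  rw [Finset.sum_comm]
  refine Finset.sum_congr rfl fun a _ => ?_
  simp [ite_mul]

lemma pmfEntropy_map_eq (P : PMF α) (g : α → β) :
    pmfEntropy (P.map g) = ∑ a, (P a).toReal * (-(Real.log (((P.map g) (g a)).toReal))) := by
  rw [pmfEntropy, ← group_sum P g (fun b => -(Real.log (((P.map g) b).toReal)))]
  refine Finset.sum_congr rfl fun b _ => ?_
  rw [Real.negMulLog]
  ring

lemma apply_le_map (P : PMF α) (g : α → β) (a : α) :
    (P a).toReal ≤ ((P.map g) (g a)).toReal := by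
  rw [map_toReal]
  have := Finset.single_le_sum (f := fun a' => if g a' = g a then (P a').toReal else 0)
    (fun a' _ => by positivity) (Finset.mem_univ a)
  simpa using this

lemma map_comp_le (P : PMF α) (g1 : α → β) (g2 : α → γ') (h : β → γ')
    (hcomp : ∀ a, h (g1 a) = g2 a) (b : β) :
    ((P.map g1) b).toReal ≤ ((P.map g2) (h b)).toReal := by
  rw [map_toReal, map_toReal]
  refine Finset.sum_le_sum fun a _ => ?_
  split_ifs with h1 h2
  · exact le_refl _
  · exact absurd (h1 ▸ (hcomp a).symm) h2
  · positivity
  · exact le_refl _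

lemma entropy_map_mono (P : PMF α) (g1 : α → β) (g2 : α → γ') (h : β → γ')
    (hcomp : ∀ a, h (g1 a) = g2 a) :
    pmfEntropy (P.map g2) ≤ pmfEntropy (P.map g1) := by
  rw [pmfEntropy_map_eq P g1, pmfEntropy_map_eq P g2]
  refine Finset.sum_le_sum fun a _ => ?_
  rcases eq_or_lt_of_le (ENNReal.toReal_nonneg : (0:ℝ) ≤ (P a).toReal) with h0 | h0
  · rw [← h0]; simp
  · have h1 : 0 < ((P.map g1) (g1 a)).toReal := lt_of_lt_of_le h0 (apply_le_map P g1 a)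
    have h2 : ((P.map g1) (g1 a)).toReal ≤ ((P.map g2) (g2 a)).toReal := by
      have := map_comp_le P g1 g2 h hcomp (g1 a)
      rwa [hcomp a] at this
    have := Real.log_le_log h1 h2
    nlinarith

lemma marginal_sum (P : PMF α) (u : α → β) (v : α → γ') (c : γ') :
    ∑ b, ((P.map (fun a => (u a, v a))) (b, c)).toReal = ((P.map v) c).toReal := by
  simp_rw [map_toReal]
  rw [Finset.sum_comm]
  refine Finset.sum_congr rfl fun a _ => ?_
  simp [Prod.ext_iff, ite_and]

lemma typical_card {β2 γ2 : Type} [Fintype β2] [Fintype γ2]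
    (pXY : β2 × γ2 → ℝ) (pY : γ2 → ℝ) (hpos : ∀ z, 0 ≤ pXY z)
    (hmarg : ∀ c, ∑ b, pXY (b, c) = pY c)
    {n : ℕ} (y : Fin n → γ2) (hy : ∀ i, 0 < pY (y i)) (c : ℝ) :
    ((Finset.univ.filter (fun x : Fin n → β2 => (∀ i, 0 < pXY (x i, y i)) ∧
        ∑ i, (Real.log (pY (y i)) - Real.log (pXY (x i, y i))) ≤ c)).card : ℝ)
      ≤ Real.exp c := by
  set r : Fin n → β2 → ℝ := fun i b => pXY (b, y i) / pY (y i) with hr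
  have htot : ∑ x : Fin n → β2, ∏ i, r i (x i) = 1 := by
    rw [sum_pi_prod r]
    rw [Finset.prod_eq_one]
    intro i _
    rw [hr]
    rw [← Finset.sum_div, hmarg, div_self (hy i).ne']
  have hlb : ∀ x ∈ Finset.univ.filter (fun x : Fin n → β2 => (∀ i, 0 < pXY (x i, y i)) ∧
      ∑ i, (Real.log (pY (y i)) - Real.log (pXY (x i, y i))) ≤ c),
      Real.exp (-c) ≤ ∏ i, r i (x i) := by
    intro x hx
    rw [Finset.mem_filter] at hx
    obtain ⟨-, hx1, hx2⟩ := hx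
    have hrpos : ∀ i, 0 < r i (x i) := fun i => div_pos (hx1 i) (hy i)
    have : ∏ i, r i (x i) = Real.exp (∑ i, Real.log (r i (x i))) := by
      rw [Real.exp_sum]
      exact (Finset.prod_congr rfl fun i _ => (Real.exp_log (hrpos i)).symm)
    rw [this]
    apply Real.exp_le_exp.2
    have : ∑ i, Real.log (r i (x i))
        = -∑ i, (Real.log (pY (y i)) - Real.log (pXY (x i, y i))) := by
      rw [← Finset.sum_neg_distrib]
      refine Finset.sum_congr rfl fun i _ => ?_
      rw [hr]
      rw [Real.log_div (hx1 i).ne' (hy i).ne']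
      ring
    rw [this]
    linarith
  set s := Finset.univ.filter (fun x : Fin n → β2 => (∀ i, 0 < pXY (x i, y i)) ∧
      ∑ i, (Real.log (pY (y i)) - Real.log (pXY (x i, y i))) ≤ c) with hs
  have key : (s.card : ℝ) * Real.exp (-c) ≤ 1 := by
    calc (s.card : ℝ) * Real.exp (-c)
        = ∑ _x ∈ s, Real.exp (-c) := by
          rw [Finset.sum_const, nsmul_eq_mul]
      _ ≤ ∑ x ∈ s, ∏ i, r i (x i) := Finset.sum_le_sum hlb
      _ ≤ ∑ x : Fin n → β2, ∏ i, r i (x i) := by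
          apply Finset.sum_le_sum_of_subset_of_nonneg (Finset.filter_subset _ _)
          intro x _ _
          exact Finset.prod_nonneg fun i _ => div_nonneg (hpos _) (hy i).le
      _ = 1 := htot
  calc (s.card : ℝ)
      = (s.card : ℝ) * Real.exp (-c) * Real.exp c := by
        rw [mul_assoc, ← Real.exp_add, neg_add_cancel, Real.exp_zero, mul_one]
    _ ≤ 1 * Real.exp c := mul_le_mul_of_nonneg_right key (Real.exp_pos c).le
    _ = Real.exp c := one_mul _

lemma binning {V : Type} [Fintype V] [DecidableEq V] {M : ℕ} (hM : 0 < M)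
    {u v : V} (huv : u ≠ v) :
    ∑ f : V → Fin M, (if f u = f v then (1:ℝ) else 0)
      = (Fintype.card (V → Fin M) : ℝ) / M := by
  rw [← Equiv.sum_comp (Equiv.funSplitAt v (Fin M)).symm
    (fun f : V → Fin M => if f u = f v then (1:ℝ) else 0)]
  have : ∀ z : Fin M × ({j : V // j ≠ v} → Fin M),
      (if (Equiv.funSplitAt v (Fin M)).symm z u = (Equiv.funSplitAt v (Fin M)).symm z v
        then (1:ℝ) else 0)
        = if z.2 ⟨u, huv⟩ = z.1 then (1:ℝ) else 0 := by
    intro z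
    rw [Equiv.funSplitAt_symm_apply, Equiv.funSplitAt_symm_apply, dif_pos rfl, dif_neg huv]
  simp_rw [this]
  rw [Fintype.sum_prod_type_right]
  have : ∀ g : {j : V // j ≠ v} → Fin M,
      ∑ b : Fin M, (if g ⟨u, huv⟩ = b then (1:ℝ) else 0) = 1 := by
    intro g; simp
  simp_rw [this]
  rw [Finset.sum_const, nsmul_eq_mul, mul_one, Finset.card_univ]
  have hcard : Fintype.card (V → Fin M) = M * Fintype.card ({j : V // j ≠ v} → Fin M) := by
    rw [Fintype.card_fun, Fintype.card_fun, Fintype.card_fin]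
    have h1 : Fintype.card {j : V // j ≠ v} = Fintype.card V - 1 := by
      simp [Fintype.card_subtype_compl]
    have h2 : 1 ≤ Fintype.card V := Fintype.card_pos_iff.2 ⟨v⟩
    rw [h1, ← pow_succ', Nat.sub_add_cancel h2]
  rw [hcard]
  push_cast
  rw [mul_comm, mul_div_assoc, div_self (by exact_mod_cast hM.ne' : (M:ℝ) ≠ 0), mul_one]


end Basic

section Main

variable {𝓧 : Type} [Fintype 𝓧] {K : ℕ} {𝓨 : Fin K → Type} [∀ k, Fintype (𝓨 k)]

noncomputable def pXY (P : PMF (𝓧 × ∀ k, 𝓨 k)) (k : Fin K) (z : 𝓧 × 𝓨 k) : ℝ :=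
  ((P.map fun a => (a.1, a.2 k)) z).toReal

noncomputable def pY (P : PMF (𝓧 × ∀ k, 𝓨 k)) (k : Fin K) (y : 𝓨 k) : ℝ :=
  ((P.map fun a => a.2 k) y).toReal

noncomputable def ell (P : PMF (𝓧 × ∀ k, 𝓨 k)) (k : Fin K) (a : 𝓧 × ∀ k, 𝓨 k) : ℝ :=
  Real.log (pY P k (a.2 k)) - Real.log (pXY P k (a.1, a.2 k))

noncomputable def mu (P : PMF (𝓧 × ∀ k, 𝓨 k)) (k : Fin K) : ℝ :=
  ∑ a, (P a).toReal * ell P k a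

lemma mu_eq (P : PMF (𝓧 × ∀ k, 𝓨 k)) (k : Fin K) :
    mu P k = pmfEntropy (P.map fun a => (a.1, a.2 k)) - pmfEntropy (P.map fun a => a.2 k) := by
  rw [mu, pmfEntropy_map_eq P (fun a => (a.1, a.2 k)), pmfEntropy_map_eq P (fun a => a.2 k),
    ← Finset.sum_sub_distrib]
  refine Finset.sum_congr rfl fun a _ => ?_
  rw [ell, pXY, pY]
  ring

lemma entropy_diff_nonneg (P : PMF (𝓧 × ∀ k, 𝓨 k)) (k : Fin K) :
    0 ≤ pmfEntropy (P.map fun a => (a.1, a.2 k)) - pmfEntropy (P.map fun a => a.2 k) := by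
  have := entropy_map_mono P (fun a => (a.1, a.2 k)) (fun a => a.2 k) Prod.snd (fun a => rfl)
  linarith

lemma marginal_pXY (P : PMF (𝓧 × ∀ k, 𝓨 k)) (k : Fin K) (c : 𝓨 k) :
    ∑ b, pXY P k (b, c) = pY P k c :=
  marginal_sum P (fun a => a.1) (fun a => a.2 k) c

set_option maxHeartbeats 1000000 in
lemma exists_code [Field 𝓧] (P : PMF (𝓧 × ∀ k, 𝓨 k)) {n M : ℕ}
    (hn : 0 < n) (hM : 0 < M) {γ : ℝ} (hγ : 0 < γ) :
    ∃ (f : (Fin n → 𝓧) → Fin M) (g : ∀ k : Fin K, Fin M × (Fin n → 𝓨 k) → (Fin n → 𝓧)),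
      ∀ k : Fin K,
        iidProb P n (fun ω => (fun i => (ω i).1)
            ≠ g k (f (fun i => (ω i).1), fun i => (ω i).2 k))
          ≤ (∑ a, (P a).toReal * (ell P k a - mu P k) ^ 2) / (n * γ ^ 2)
            + (∑ j : Fin K, Real.exp (n * mu P j + n * γ)) / M := by
  classical
  have hp0 : ∀ a : 𝓧 × ∀ k, 𝓨 k, (0:ℝ) ≤ (P a).toReal := fun a => ENNReal.toReal_nonneg
  have hp1 : ∑ a, (P a).toReal = 1 := pmf_sum_one P
  have hite0 : ∀ (c : Prop) (inst : Decidable c) (x : ℝ), 0 ≤ x → 0 ≤ (@ite ℝ c inst x 0) := by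
    intro c inst x hx
    split_ifs
    · exact hx
    · exact le_refl 0
  have hXYpos : ∀ (k : Fin K) (a : 𝓧 × ∀ k, 𝓨 k),
      0 < (P a).toReal → 0 < pXY P k (a.1, a.2 k) := fun k a ha =>
    lt_of_lt_of_le ha (apply_le_map P (fun a => (a.1, a.2 k)) a)
  have hYpos : ∀ (k : Fin K) (a : 𝓧 × ∀ k, 𝓨 k),
      0 < (P a).toReal → 0 < pY P k (a.2 k) := fun k a ha =>
    lt_of_lt_of_le ha (apply_le_map P (fun a => a.2 k) a)
  have hprodpos : ∀ ω : Fin n → (𝓧 × ∀ k, 𝓨 k),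
      0 < ∏ i, (P (ω i)).toReal → ∀ i, 0 < (P (ω i)).toReal := by
    intro ω hw i
    rcases (hp0 (ω i)).lt_or_eq with h | h
    · exact h
    · rw [Finset.prod_eq_zero (Finset.mem_univ i) h.symm] at hw
      exact absurd hw (lt_irrefl 0)
  -- typicality predicate
  set T : ∀ k : Fin K, (Fin n → 𝓧) → (Fin n → 𝓨 k) → Prop := fun k x y =>
    (∀ i, 0 < pXY P k (x i, y i)) ∧
      ∑ i, (Real.log (pY P k (y i)) - Real.log (pXY P k (x i, y i)))
        ≤ (n : ℝ) * mu P k + n * γ with hT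
  -- probability of a bad collision for a given binning f
  set B : Fin K → ((Fin n → 𝓧) → Fin M) → ℝ := fun k f =>
    ∑ ω : Fin n → (𝓧 × ∀ k, 𝓨 k),
      if (∃ x', x' ≠ (fun i => (ω i).1) ∧ T k x' (fun i => (ω i).2 k) ∧
          f x' = f (fun i => (ω i).1)) then ∏ i, (P (ω i)).toReal else 0 with hB
  have hBnonneg : ∀ k f, 0 ≤ B k f := by
    intro k f
    refine Finset.sum_nonneg fun ω _ => ?_
    split_ifs
    · exact Finset.prod_nonneg fun i _ => hp0 _
    · exact le_refl 0
  set cardF : ℝ := (Fintype.card ((Fin n → 𝓧) → Fin M) : ℝ) with hcardF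
  -- average of B over all binnings
  have hBavg : ∀ k : Fin K, ∑ f : (Fin n → 𝓧) → Fin M, B k f
      ≤ Real.exp ((n : ℝ) * mu P k + n * γ) * (cardF / M) := by
    intro k
    set S : (Fin n → (𝓧 × ∀ k, 𝓨 k)) → Finset (Fin n → 𝓧) := fun ω =>
      Finset.univ.filter (fun x' => x' ≠ (fun i => (ω i).1) ∧
        T k x' (fun i => (ω i).2 k)) with hS
    have step1 : ∀ (f : (Fin n → 𝓧) → Fin M) (ω : Fin n → (𝓧 × ∀ k, 𝓨 k)),
        (if (∃ x', x' ≠ (fun i => (ω i).1) ∧ T k x' (fun i => (ω i).2 k) ∧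
            f x' = f (fun i => (ω i).1)) then ∏ i, (P (ω i)).toReal else 0)
          ≤ (∏ i, (P (ω i)).toReal)
              * ∑ x' ∈ S ω, (if f x' = f (fun i => (ω i).1) then (1:ℝ) else 0) := by
      intro f ω
      have hw : 0 ≤ ∏ i, (P (ω i)).toReal := Finset.prod_nonneg fun i _ => hp0 _
      split_ifs with h
      · obtain ⟨x', hne, hTx, hfx⟩ := h
        have hx'S : x' ∈ S ω := by
          rw [hS, Finset.mem_filter]
          exact ⟨Finset.mem_univ _, hne, hTx⟩
        have h1 : (1:ℝ) ≤ ∑ x'' ∈ S ω, (if f x'' = f (fun i => (ω i).1) then (1:ℝ) else 0) := by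
          have := Finset.single_le_sum
            (f := fun x'' => if f x'' = f (fun i => (ω i).1) then (1:ℝ) else 0)
            (fun x'' _ => by split_ifs <;> norm_num) hx'S
          simp only [if_pos hfx] at this
          exact this
        nlinarith
      · refine mul_nonneg hw (Finset.sum_nonneg fun x'' _ => ?_)
        split_ifs <;> norm_num
    have hScard : ∀ ω : Fin n → (𝓧 × ∀ k, 𝓨 k), 0 < ∏ i, (P (ω i)).toReal →
        ((S ω).card : ℝ) ≤ Real.exp ((n : ℝ) * mu P k + n * γ) := by
      intro ω hwpos
      have hy : ∀ i, 0 < pY P k ((fun i => (ω i).2 k) i) := fun i =>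
        hYpos k (ω i) (hprodpos ω hwpos i)
      have htc := typical_card (fun z => pXY P k z) (pY P k)
        (fun z => ENNReal.toReal_nonneg) (fun c => marginal_pXY P k c)
        (fun i => (ω i).2 k) hy ((n : ℝ) * mu P k + n * γ)
      refine le_trans ?_ htc
      have hsub : S ω ⊆ Finset.univ.filter
          (fun x : Fin n → 𝓧 => (∀ i, 0 < pXY P k (x i, (fun i => (ω i).2 k) i)) ∧
            ∑ i, (Real.log (pY P k ((fun i => (ω i).2 k) i))
              - Real.log (pXY P k (x i, (fun i => (ω i).2 k) i)))
              ≤ (n : ℝ) * mu P k + n * γ) := by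
        intro x hx
        rw [hS, Finset.mem_filter] at hx
        rw [Finset.mem_filter]
        exact ⟨Finset.mem_univ _, hx.2.2⟩
      exact_mod_cast Nat.cast_le.mpr (Finset.card_le_card hsub)
    calc ∑ f : (Fin n → 𝓧) → Fin M, B k f
        ≤ ∑ f : (Fin n → 𝓧) → Fin M, ∑ ω : Fin n → (𝓧 × ∀ k, 𝓨 k),
            (∏ i, (P (ω i)).toReal)
              * ∑ x' ∈ S ω, (if f x' = f (fun i => (ω i).1) then (1:ℝ) else 0) :=
          Finset.sum_le_sum fun f _ => Finset.sum_le_sum fun ω _ => step1 f ω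
      _ = ∑ ω : Fin n → (𝓧 × ∀ k, 𝓨 k),
            (∏ i, (P (ω i)).toReal) * (((S ω).card : ℝ) * (cardF / M)) := by
          rw [Finset.sum_comm]
          refine Finset.sum_congr rfl fun ω _ => ?_
          rw [← Finset.mul_sum]
          congr 1
          rw [Finset.sum_comm]
          have hbin : ∀ x' ∈ S ω, (∑ f : (Fin n → 𝓧) → Fin M,
              if f x' = f (fun i => (ω i).1) then (1:ℝ) else 0) = cardF / M := by
            intro x' hx'
            rw [hS, Finset.mem_filter] at hx'
            exact binning hM hx'.2.1
          rw [Finset.sum_congr rfl hbin, Finset.sum_const, nsmul_eq_mul]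
      _ ≤ ∑ ω : Fin n → (𝓧 × ∀ k, 𝓨 k),
            (∏ i, (P (ω i)).toReal) * (Real.exp ((n : ℝ) * mu P k + n * γ) * (cardF / M)) := by
          refine Finset.sum_le_sum fun ω _ => ?_
          have hw : 0 ≤ ∏ i, (P (ω i)).toReal := Finset.prod_nonneg fun i _ => hp0 _
          rcases hw.lt_or_eq with hwpos | hwzero
          · have hcm : (0:ℝ) ≤ cardF / M := by positivity
            exact mul_le_mul_of_nonneg_left
              (mul_le_mul_of_nonneg_right (hScard ω hwpos) hcm) hw
          · rw [← hwzero, zero_mul, zero_mul]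
      _ = Real.exp ((n : ℝ) * mu P k + n * γ) * (cardF / M) := by
          rw [← Finset.sum_mul, sum_prod_p hp1, one_mul]
  -- pick a good binning f
  haveI : Nonempty (Fin M) := ⟨⟨0, hM⟩⟩
  have hex : ∃ f : (Fin n → 𝓧) → Fin M,
      ∑ k : Fin K, B k f ≤ ∑ j : Fin K, Real.exp ((n : ℝ) * mu P j + n * γ) / M := by
    have hsum : ∑ f : (Fin n → 𝓧) → Fin M, ∑ k : Fin K, B k f
        ≤ ∑ _f : (Fin n → 𝓧) → Fin M, ∑ j : Fin K, Real.exp ((n : ℝ) * mu P j + n * γ) / M := by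
      rw [Finset.sum_comm, Finset.sum_const, Finset.card_univ, nsmul_eq_mul]
      calc ∑ k : Fin K, ∑ f : (Fin n → 𝓧) → Fin M, B k f
          ≤ ∑ k : Fin K, Real.exp ((n : ℝ) * mu P k + n * γ) * (cardF / M) :=
            Finset.sum_le_sum fun k _ => hBavg k
        _ = cardF * ∑ j : Fin K, Real.exp ((n : ℝ) * mu P j + n * γ) / M := by
            rw [Finset.mul_sum]
            refine Finset.sum_congr rfl fun j _ => ?_
            ring
    obtain ⟨f, -, hf⟩ := Finset.exists_le_of_sum_le Finset.univ_nonempty hsum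
    exact ⟨f, hf⟩
  obtain ⟨f, hf⟩ := hex
  -- the decoders
  refine ⟨f, fun k bz => if h : ∃ x, T k x bz.2 ∧ f x = bz.1 then h.choose
    else fun _ => (0:𝓧), fun k => ?_⟩
  -- decompose the error event
  have herr : iidProb P n (fun ω => (fun i => (ω i).1)
      ≠ (if h : ∃ x, T k x (fun i => (ω i).2 k) ∧ f x = f (fun i => (ω i).1)
          then h.choose else fun _ => (0:𝓧)))
      ≤ (∑ ω : Fin n → (𝓧 × ∀ k, 𝓨 k),
          if (n : ℝ) * (∑ a, (P a).toReal * ell P k a) + n * γ < ∑ j, ell P k (ω j)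
            then ∏ i, (P (ω i)).toReal else 0)
        + B k f := by
    have hpoint : ∀ ω : Fin n → (𝓧 × ∀ k, 𝓨 k),
        (@ite ℝ ((fun i => (ω i).1)
            ≠ (if h : ∃ x, T k x (fun i => (ω i).2 k) ∧ f x = f (fun i => (ω i).1)
              then h.choose else fun _ => (0:𝓧))) (Classical.propDecidable _)
          (∏ i, (P (ω i)).toReal) 0)
          ≤ (if (n : ℝ) * (∑ a, (P a).toReal * ell P k a) + n * γ < ∑ j, ell P k (ω j)
              then ∏ i, (P (ω i)).toReal else 0)
            + (if (∃ x', x' ≠ (fun i => (ω i).1) ∧ T k x' (fun i => (ω i).2 k) ∧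
                f x' = f (fun i => (ω i).1)) then ∏ i, (P (ω i)).toReal else 0) := by
      intro ω
      have hw : 0 ≤ ∏ i, (P (ω i)).toReal := Finset.prod_nonneg fun i _ => hp0 _
      by_cases hE : (fun i => (ω i).1)
          ≠ (if h : ∃ x, T k x (fun i => (ω i).2 k) ∧ f x = f (fun i => (ω i).1)
            then h.choose else fun _ => (0:𝓧))
      swap
      · rw [if_neg hE]
        exact add_nonneg (hite0 _ _ _ hw) (hite0 _ _ _ hw)
      rw [if_pos hE]
      rcases hw.lt_or_eq with hwpos | hwzero
      · -- positive probability: one of the two bad events must occur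
        by_cases hC : (n : ℝ) * (∑ a, (P a).toReal * ell P k a) + n * γ < ∑ j, ell P k (ω j)
        · have h2 : (0:ℝ) ≤ if (∃ x', x' ≠ (fun i => (ω i).1) ∧
              T k x' (fun i => (ω i).2 k) ∧ f x' = f (fun i => (ω i).1))
              then ∏ i, (P (ω i)).toReal else 0 := hite0 _ _ _ hw
          rw [if_pos hC]
          linarith
        · -- the true source word is typical
          have hTx : T k (fun i => (ω i).1) (fun i => (ω i).2 k) := by
            refine ⟨fun i => hXYpos k (ω i) (hprodpos ω hwpos i), ?_⟩
            have heq : ∑ i, (Real.log (pY P k ((ω i).2 k))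
                - Real.log (pXY P k ((ω i).1, (ω i).2 k))) = ∑ j, ell P k (ω j) :=
              Finset.sum_congr rfl fun i _ => rfl
            have hmu : (∑ a, (P a).toReal * ell P k a) = mu P k := rfl
            rw [hmu] at hC
            show ∑ i, (Real.log (pY P k ((ω i).2 k))
                - Real.log (pXY P k ((ω i).1, (ω i).2 k))) ≤ (n : ℝ) * mu P k + n * γ
            rw [heq]
            linarith [not_lt.mp hC]
          have hexx : ∃ x, T k x (fun i => (ω i).2 k) ∧ f x = f (fun i => (ω i).1) :=
            ⟨(fun i => (ω i).1), hTx, rfl⟩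
          have hchoose := hexx.choose_spec
          by_cases hc : hexx.choose = (fun i => (ω i).1)
          · exfalso
            apply hE
            rw [dif_pos hexx]
            exact hc.symm
          · have hbad : (∃ x', x' ≠ (fun i => (ω i).1) ∧
                T k x' (fun i => (ω i).2 k) ∧ f x' = f (fun i => (ω i).1)) :=
              ⟨hexx.choose, hc, hchoose.1, hchoose.2⟩
            rw [if_pos hbad]
            have h3 : (0:ℝ) ≤ if (n : ℝ) * (∑ a, (P a).toReal * ell P k a) + n * γ
                < ∑ j, ell P k (ω j) then ∏ i, (P (ω i)).toReal else 0 := hite0 _ _ _ hw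
            linarith
      · rw [← hwzero]
        exact add_nonneg (hite0 _ _ 0 le_rfl) (hite0 _ _ 0 le_rfl)
    calc iidProb P n (fun ω => (fun i => (ω i).1)
        ≠ (if h : ∃ x, T k x (fun i => (ω i).2 k) ∧ f x = f (fun i => (ω i).1)
            then h.choose else fun _ => (0:𝓧)))
        = ∑ ω : Fin n → (𝓧 × ∀ k, 𝓨 k),
            @ite ℝ ((fun i => (ω i).1)
              ≠ (if h : ∃ x, T k x (fun i => (ω i).2 k) ∧ f x = f (fun i => (ω i).1)
                then h.choose else fun _ => (0:𝓧))) (Classical.propDecidable _)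
              (∏ i, (P (ω i)).toReal) 0 := rfl
      _ ≤ ∑ ω : Fin n → (𝓧 × ∀ k, 𝓨 k),
            ((if (n : ℝ) * (∑ a, (P a).toReal * ell P k a) + n * γ < ∑ j, ell P k (ω j)
              then ∏ i, (P (ω i)).toReal else 0)
            + (if (∃ x', x' ≠ (fun i => (ω i).1) ∧ T k x' (fun i => (ω i).2 k) ∧
                f x' = f (fun i => (ω i).1)) then ∏ i, (P (ω i)).toReal else 0)) :=
          Finset.sum_le_sum fun ω _ => hpoint ω
      _ = (∑ ω : Fin n → (𝓧 × ∀ k, 𝓨 k),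
            if (n : ℝ) * (∑ a, (P a).toReal * ell P k a) + n * γ < ∑ j, ell P k (ω j)
              then ∏ i, (P (ω i)).toReal else 0)
          + B k f := Finset.sum_add_distrib
  refine le_trans herr (add_le_add ?_ ?_)
  · -- Chebyshev bound
    have hcheb := chebyshev (p := fun a => (P a).toReal) hp0 hp1 hn (ell P k) hγ
    have hmu : (∑ b, (P b).toReal * ell P k b) = mu P k := rfl
    rw [hmu] at hcheb
    exact hcheb
  · -- collision bound
    have h1 : B k f ≤ ∑ j : Fin K, B j f :=
      Finset.single_le_sum (fun j _ => hBnonneg j f) (Finset.mem_univ k)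
    refine le_trans h1 (le_trans hf (le_of_eq ?_))
    rw [Finset.sum_div]

end Main

end USC

set_option maxHeartbeats 2000000 in
theorem universal_source_coding_with_side_information
    {𝓧 : Type} [Field 𝓧] [Fintype 𝓧] {K : ℕ} (hK : 0 < K)
    {𝓨 : Fin K → Type} [∀ k, Fintype (𝓨 k)]
    (P : PMF (𝓧 × ∀ k, 𝓨 k)) {ε δ : ℝ} (hε : 0 < ε) (hδ : 0 < δ) :
    ∃ t m₀ : ℕ, 0 < t ∧ 0 < m₀ ∧ ∀ m : ℕ, m₀ ≤ m →
      ∃ (M : ℕ) (f : (Fin (t * 2 ^ m) → 𝓧) → Fin M)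
        (g : ∀ k : Fin K, Fin M × (Fin (t * 2 ^ m) → 𝓨 k) → (Fin (t * 2 ^ m) → 𝓧)),
        0 < M ∧
        Finset.univ.sup' (Finset.univ_nonempty_iff.mpr ⟨⟨0, hK⟩⟩)
            (fun k => condEntropyQ P k)
          < Real.log M / ((t * 2 ^ m : ℕ) * Real.log (Fintype.card 𝓧)) ∧
        Real.log M / ((t * 2 ^ m : ℕ) * Real.log (Fintype.card 𝓧))
          < Finset.univ.sup' (Finset.univ_nonempty_iff.mpr ⟨⟨0, hK⟩⟩)
              (fun k => condEntropyQ P k) + δ ∧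
        ∀ k : Fin K,
          iidProb P (t * 2 ^ m)
            (fun ω => (fun i => (ω i).1)
              ≠ g k (f (fun i => (ω i).1), fun i => (ω i).2 k)) < ε := by
  classical
  have hcard : 1 < Fintype.card 𝓧 := Fintype.one_lt_card
  have hlogq : 0 < Real.log (Fintype.card 𝓧) :=
    Real.log_pos (by exact_mod_cast hcard)
  set logq := Real.log ((Fintype.card 𝓧 : ℕ) : ℝ) with hlogqdef
  set hQ := Finset.univ.sup' (Finset.univ_nonempty_iff.mpr ⟨⟨0, hK⟩⟩)
    (fun k => condEntropyQ P k) with hhQ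
  have hce_nonneg : ∀ k : Fin K, 0 ≤ condEntropyQ P k := by
    intro k
    rw [condEntropyQ]
    exact div_nonneg (USC.entropy_diff_nonneg P k) hlogq.le
  have hQ0 : 0 ≤ hQ := by
    refine le_trans (hce_nonneg ⟨0, hK⟩) ?_
    exact Finset.le_sup' (fun k => condEntropyQ P k) (Finset.mem_univ ⟨0, hK⟩)
  have hmu_eq : ∀ k : Fin K, USC.mu P k = condEntropyQ P k * logq := by
    intro k
    rw [USC.mu_eq, condEntropyQ, ← hlogqdef, div_mul_cancel₀ _ hlogq.ne']
  have hmu_le : ∀ k : Fin K, USC.mu P k ≤ hQ * logq := by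
    intro k
    rw [hmu_eq k]
    exact mul_le_mul_of_nonneg_right
      (Finset.le_sup' (fun k => condEntropyQ P k) (Finset.mem_univ k)) hlogq.le
  set γ := logq * δ / 4 with hγdef
  have hγ : 0 < γ := by positivity
  set Vsum := ∑ j : Fin K, ∑ a, (P a).toReal * (USC.ell P j a - USC.mu P j) ^ 2 with hVs
  have hVk : ∀ k : Fin K,
      (∑ a, (P a).toReal * (USC.ell P k a - USC.mu P k) ^ 2) ≤ Vsum := by
    intro k
    rw [hVs]
    exact Finset.single_le_sum
      (f := fun j => ∑ a, (P a).toReal * (USC.ell P j a - USC.mu P j) ^ 2)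
      (fun j _ => Finset.sum_nonneg fun a _ =>
        mul_nonneg ENNReal.toReal_nonneg (sq_nonneg _)) (Finset.mem_univ k)
  -- asymptotic conditions
  have hev1 : ∀ᶠ (m : ℕ) in Filter.atTop, Real.log 2 < (m : ℝ) * (logq * (δ / 2)) :=
    (tendsto_natCast_atTop_atTop.atTop_mul_const (by positivity)).eventually_gt_atTop _
  have hev2 : ∀ᶠ (m : ℕ) in Filter.atTop, Vsum / ((m : ℝ) * γ ^ 2) < ε / 2 := by
    have t1 : Filter.Tendsto (fun m : ℕ => Vsum / ((m : ℝ) * γ ^ 2))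
        Filter.atTop (nhds 0) := by
      have t0 := tendsto_one_div_atTop_nhds_zero_nat.const_mul (Vsum / γ ^ 2)
      rw [mul_zero] at t0
      refine t0.congr fun m => ?_
      rw [mul_one_div, div_div, mul_comm]
    exact t1.eventually_lt_const (half_pos hε)
  have hev3 : ∀ᶠ (m : ℕ) in Filter.atTop,
      (K : ℝ) * Real.exp (-((m : ℝ) * γ)) < ε / 2 := by
    have t1 : Filter.Tendsto (fun m : ℕ => (K : ℝ) * Real.exp (-((m : ℝ) * γ)))
        Filter.atTop (nhds 0) := by
      have h1 : Filter.Tendsto (fun m : ℕ => (m : ℝ) * γ) Filter.atTop Filter.atTop :=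
        tendsto_natCast_atTop_atTop.atTop_mul_const hγ
      have h2 := Real.tendsto_exp_neg_atTop_nhds_zero.comp h1
      have h3 := h2.const_mul (K : ℝ)
      rw [mul_zero] at h3
      exact h3
    exact t1.eventually_lt_const (half_pos hε)
  obtain ⟨N, hN⟩ := Filter.eventually_atTop.mp ((hev1.and hev2).and hev3)
  refine ⟨1, N + 1, one_pos, Nat.succ_pos N, fun m hm => ?_⟩
  set n := 1 * 2 ^ m with hn
  have hnpos : 0 < n := by positivity
  have hnN : N ≤ n := by
    have h2 : m < 2 ^ m := Nat.lt_two_pow_self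
    have h3 : n = 2 ^ m := one_mul _
    omega
  obtain ⟨⟨hc1, hc2⟩, hc3⟩ := hN n hnN
  have hnr : 0 < (n : ℝ) := by exact_mod_cast hnpos
  set Earg := (n : ℝ) * (logq * (hQ + δ / 2)) with hEarg
  have hEarg0 : 0 ≤ Earg :=
    mul_nonneg hnr.le (mul_nonneg hlogq.le (by linarith))
  set M := ⌈Real.exp Earg⌉₊ with hMdef
  have hMpos : 0 < M := Nat.ceil_pos.mpr (Real.exp_pos _)
  have hMge : Real.exp Earg ≤ (M : ℝ) := Nat.le_ceil _
  have hMlt : (M : ℝ) < Real.exp Earg + 1 := Nat.ceil_lt_add_one (Real.exp_pos _).le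
  have hlogM_ge : Earg ≤ Real.log M := by
    rw [← Real.log_exp Earg]
    exact Real.log_le_log (Real.exp_pos _) hMge
  have hlogM_lt : Real.log M < Earg + Real.log 2 := by
    have h1 : Real.log M < Real.log (Real.exp Earg + 1) :=
      Real.log_lt_log (by exact_mod_cast hMpos) hMlt
    have h2 : Real.exp Earg + 1 ≤ 2 * Real.exp Earg := by
      nlinarith [Real.one_le_exp hEarg0]
    have h3 : Real.log (Real.exp Earg + 1) ≤ Real.log (2 * Real.exp Earg) :=
      Real.log_le_log (by positivity) h2
    rw [Real.log_mul two_ne_zero (Real.exp_pos _).ne', Real.log_exp] at h3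
    linarith
  obtain ⟨f, g, hfg⟩ := USC.exists_code P (n := n) (M := M) hnpos hMpos hγ
  refine ⟨M, f, g, hMpos, ?_, ?_, ?_⟩
  · -- rate lower bound
    rw [lt_div_iff₀ (by positivity)]
    have h1 : hQ * ((n : ℝ) * logq) < Earg := by
      rw [hEarg]
      nlinarith
    linarith
  · -- rate upper bound
    rw [div_lt_iff₀ (by positivity)]
    have h1 : Earg + Real.log 2 < (hQ + δ) * ((n : ℝ) * logq) := by
      rw [hEarg]
      nlinarith
    linarith
  · -- error bounds
    intro k
    have hb := hfg k
    have hb1 : (∑ a, (P a).toReal * (USC.ell P k a - USC.mu P k) ^ 2) / ((n : ℝ) * γ ^ 2)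
        ≤ Vsum / ((n : ℝ) * γ ^ 2) := by
      gcongr
      exact hVk k
    have hb2 : (∑ j : Fin K, Real.exp ((n : ℝ) * USC.mu P j + (n : ℝ) * γ)) / (M : ℝ)
        ≤ (K : ℝ) * Real.exp (-((n : ℝ) * γ)) := by
      have hs : (∑ j : Fin K, Real.exp ((n : ℝ) * USC.mu P j + (n : ℝ) * γ))
          ≤ (K : ℝ) * Real.exp ((n : ℝ) * (hQ * logq) + (n : ℝ) * γ) := by
        calc (∑ j : Fin K, Real.exp ((n : ℝ) * USC.mu P j + (n : ℝ) * γ))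
            ≤ ∑ _j : Fin K, Real.exp ((n : ℝ) * (hQ * logq) + (n : ℝ) * γ) := by
              refine Finset.sum_le_sum fun j _ => ?_
              refine Real.exp_le_exp.2 ?_
              have := mul_le_mul_of_nonneg_left (hmu_le j) hnr.le
              linarith
          _ = (K : ℝ) * Real.exp ((n : ℝ) * (hQ * logq) + (n : ℝ) * γ) := by
              rw [Finset.sum_const, Finset.card_univ, Fintype.card_fin, nsmul_eq_mul]
      have hd : (∑ j : Fin K, Real.exp ((n : ℝ) * USC.mu P j + (n : ℝ) * γ)) / (M : ℝ)
          ≤ ((K : ℝ) * Real.exp ((n : ℝ) * (hQ * logq) + (n : ℝ) * γ)) / Real.exp Earg := by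
        have hnum : 0 ≤ ∑ j : Fin K, Real.exp ((n : ℝ) * USC.mu P j + (n : ℝ) * γ) :=
          Finset.sum_nonneg fun j _ => (Real.exp_pos _).le
        calc (∑ j : Fin K, Real.exp ((n : ℝ) * USC.mu P j + (n : ℝ) * γ)) / (M : ℝ)
            ≤ (∑ j : Fin K, Real.exp ((n : ℝ) * USC.mu P j + (n : ℝ) * γ)) / Real.exp Earg :=
              div_le_div_of_nonneg_left hnum (Real.exp_pos _) hMge
          _ ≤ ((K : ℝ) * Real.exp ((n : ℝ) * (hQ * logq) + (n : ℝ) * γ)) / Real.exp Earg := by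
              gcongr
      refine le_trans hd (le_of_eq ?_)
      rw [mul_div_assoc, ← Real.exp_sub]
      congr 1
      rw [hEarg, hγdef]
      ring
    have hfin : Vsum / ((n : ℝ) * γ ^ 2) + (K : ℝ) * Real.exp (-((n : ℝ) * γ)) < ε := by
      linarith
    calc iidProb P n (fun ω => (fun i => (ω i).1)
          ≠ g k (f (fun i => (ω i).1), fun i => (ω i).2 k))
        ≤ (∑ a, (P a).toReal * (USC.ell P k a - USC.mu P k) ^ 2) / ((n : ℝ) * γ ^ 2)
            + (∑ j : Fin K, Real.exp ((n : ℝ) * USC.mu P j + (n : ℝ) * γ)) / (M : ℝ) := hb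
      _ ≤ Vsum / ((n : ℝ) * γ ^ 2) + (K : ℝ) * Real.exp (-((n : ℝ) * γ)) :=
          add_le_add hb1 hb2
      _ < ε := hfin
end

section
/- Let 𝒳 be a finite field with q elements and let P₁,…,P_K be probability distributions on 𝒳. For every ε>0 and δ>0 there exist positive integers t and m₀ such that for every m ≥ m₀, setting n = t·2^m, there exist a positive integer M with (log M)/(n·log q) < max_{1≤k≤K} H_q(P_k) + δ, an encoder f : 𝒳ⁿ → Fin M, and decoders g_k : Fin M → 𝒳ⁿ for 1 ≤ k ≤ K, such that for every k, if X^{1:n} is distributed according to the n-fold product P_k^{⊗n}, then Pr[X^{1:n} ≠ g_k(f(X^{1:n}))] < ε. -/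
open scoped BigOperators
open scoped ENNReal
open Classical Finset

section aux
variable {𝓧 : Type} [Fintype 𝓧] {n : ℕ} (p : 𝓧 → ℝ)

lemma sum_prod_fun (f : Fin n → 𝓧 → ℝ) :
    ∑ ω : Fin n → 𝓧, ∏ i, f i (ω i) = ∏ i, ∑ x, f i x := by
  rw [Finset.prod_univ_sum]
  simp [Fintype.piFinset_univ]


variable {𝓧 : Type} [Fintype 𝓧] {n : ℕ} (p : 𝓧 → ℝ)

lemma sum_w (hp1 : ∑ x, p x = 1) : ∑ ω : Fin n → 𝓧, ∏ i, p (ω i) = 1 := by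
  rw [sum_prod_fun (fun _ x => p x)]
  simp [hp1]

lemma pair_moment (hp1 : ∑ x, p x = 1) (ψ : 𝓧 → ℝ) (i j : Fin n) :
    ∑ ω : Fin n → 𝓧, (∏ l, p (ω l)) * ψ (ω i) * ψ (ω j)
      = if i = j then ∑ x, p x * ψ x ^ 2 else (∑ x, p x * ψ x) * (∑ x, p x * ψ x) := by
  have key : ∀ ω : Fin n → 𝓧,
      (∏ l, p (ω l)) * ψ (ω i) * ψ (ω j)
        = ∏ l, (p (ω l) * (if l = i then ψ (ω l) else 1) * (if l = j then ψ (ω l) else 1)) := by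
    intro ω
    rw [Finset.prod_mul_distrib, Finset.prod_mul_distrib]
    congr 1
    · congr 1
      simp [Finset.prod_ite_eq']
    · simp [Finset.prod_ite_eq']
  calc ∑ ω : Fin n → 𝓧, (∏ l, p (ω l)) * ψ (ω i) * ψ (ω j)
      = ∑ ω : Fin n → 𝓧, ∏ l, (p (ω l) * (if l = i then ψ (ω l) else 1)
          * (if l = j then ψ (ω l) else 1)) := by
        exact Finset.sum_congr rfl fun ω _ => key ω
    _ = ∏ l : Fin n, ∑ x, (p x * (if l = i then ψ x else 1) * (if l = j then ψ x else 1)) := by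
        exact sum_prod_fun (fun l x => p x * (if l = i then ψ x else 1) * (if l = j then ψ x else 1))
    _ = _ := by
        by_cases hij : i = j
        · subst hij
          simp only [if_pos rfl]
          rw [Finset.prod_eq_single i]
          · simp [pow_two, mul_assoc]
          · intro l _ hl
            simp [hl, hp1]
          · simp
        · simp only [if_neg hij]
          have hji : j ≠ i := Ne.symm hij
          have : ∀ l : Fin n, (∑ x, (p x * (if l = i then ψ x else 1)
              * (if l = j then ψ x else 1)))
              = (if l = i then (∑ x, p x * ψ x) else 1) * (if l = j then (∑ x, p x * ψ x) else 1) := by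
            intro l
            by_cases h1 : l = i <;> by_cases h2 : l = j
            · exact absurd (h1 ▸ h2) hij
            · simp [h1, h2, hij]
            · simp [h1, h2, hji]
            · simp [h1, h2, hp1]
          rw [Finset.prod_congr rfl fun l _ => this l, Finset.prod_mul_distrib]
          simp [Finset.prod_ite_eq', hij]
lemma second_moment (hp1 : ∑ x, p x = 1) (ψ : 𝓧 → ℝ) (hψ : ∑ x, p x * ψ x = 0) :
    ∑ ω : Fin n → 𝓧, (∏ l, p (ω l)) * (∑ i, ψ (ω i)) ^ 2
      = n * ∑ x, p x * ψ x ^ 2 := by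
  have expand : ∀ ω : Fin n → 𝓧, (∏ l, p (ω l)) * (∑ i, ψ (ω i)) ^ 2
      = ∑ i : Fin n, ∑ j : Fin n, (∏ l, p (ω l)) * ψ (ω i) * ψ (ω j) := by
    intro ω
    rw [pow_two, Finset.sum_mul_sum]
    rw [Finset.mul_sum]
    refine Finset.sum_congr rfl fun i _ => ?_
    rw [Finset.mul_sum]
    refine Finset.sum_congr rfl fun j _ => by ring
  rw [Finset.sum_congr rfl fun ω _ => expand ω]
  rw [Finset.sum_comm]
  have swap2 : ∀ i : Fin n, ∑ ω : Fin n → 𝓧, ∑ j : Fin n, (∏ l, p (ω l)) * ψ (ω i) * ψ (ω j)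
      = ∑ j : Fin n, ∑ ω : Fin n → 𝓧, (∏ l, p (ω l)) * ψ (ω i) * ψ (ω j) :=
    fun i => Finset.sum_comm
  rw [Finset.sum_congr rfl fun i _ => swap2 i]
  have : ∀ i : Fin n, ∑ j : Fin n, ∑ ω : Fin n → 𝓧, (∏ l, p (ω l)) * ψ (ω i) * ψ (ω j)
      = ∑ x, p x * ψ x ^ 2 := by
    intro i
    have : ∀ j : Fin n, ∑ ω : Fin n → 𝓧, (∏ l, p (ω l)) * ψ (ω i) * ψ (ω j)
        = if j = i then ∑ x, p x * ψ x ^ 2 else 0 := by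
      intro j
      rw [pair_moment p hp1 ψ i j, hψ]
      by_cases h : i = j <;> simp [h, eq_comm]
    rw [Finset.sum_congr rfl fun j _ => this j, Finset.sum_ite_eq']
    simp
  rw [Finset.sum_congr rfl fun i _ => this i]
  simp [mul_comm]
lemma chebyshev (hp0 : ∀ x, 0 ≤ p x) (hp1 : ∑ x, p x = 1) (φ : 𝓧 → ℝ) {c : ℝ}
    (hc : 0 < c) (hn : 0 < n) :
    ∑ ω : Fin n → 𝓧,
        (if (n : ℝ) * ((∑ x, p x * φ x) + c) < ∑ i, φ (ω i) then ∏ l, p (ω l) else 0)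
      ≤ (∑ x, p x * (φ x - ∑ y, p y * φ y) ^ 2) / (n * c ^ 2) := by
  set μ := ∑ y, p y * φ y with hμ
  set ψ : 𝓧 → ℝ := fun x => φ x - μ with hψdef
  have hψ : ∑ x, p x * ψ x = 0 := by
    simp only [hψdef, mul_sub, Finset.sum_sub_distrib, ← Finset.sum_mul, hp1]
    simp [hμ]
  have hw : ∀ ω : Fin n → 𝓧, (0:ℝ) ≤ ∏ l, p (ω l) :=
    fun ω => Finset.prod_nonneg fun l _ => hp0 _
  have hnc : (0:ℝ) < (n : ℝ) * c := by positivity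
  have key : ∀ ω : Fin n → 𝓧,
      (if (n : ℝ) * (μ + c) < ∑ i, φ (ω i) then ∏ l, p (ω l) else 0)
        ≤ (∏ l, p (ω l)) * (∑ i, ψ (ω i)) ^ 2 / ((n : ℝ) * c) ^ 2 := by
    intro ω
    by_cases h : (n : ℝ) * (μ + c) < ∑ i, φ (ω i)
    · rw [if_pos h]
      have hsum : ∑ i, ψ (ω i) = (∑ i, φ (ω i)) - n * μ := by
        simp [hψdef, Finset.sum_sub_distrib, mul_comm]
      have h2 : (n : ℝ) * c < ∑ i, ψ (ω i) := by
        rw [hsum]; nlinarith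
      have h3 : ((n : ℝ) * c) ^ 2 ≤ (∑ i, ψ (ω i)) ^ 2 := by nlinarith
      rw [le_div_iff₀ (by positivity)]
      nlinarith [hw ω]
    · rw [if_neg h]
      exact div_nonneg (mul_nonneg (hw ω) (sq_nonneg _)) (sq_nonneg _)
  calc ∑ ω : Fin n → 𝓧,
        (if (n : ℝ) * (μ + c) < ∑ i, φ (ω i) then ∏ l, p (ω l) else 0)
      ≤ ∑ ω : Fin n → 𝓧, (∏ l, p (ω l)) * (∑ i, ψ (ω i)) ^ 2 / ((n : ℝ) * c) ^ 2 :=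
        Finset.sum_le_sum fun ω _ => key ω
    _ = (∑ ω : Fin n → 𝓧, (∏ l, p (ω l)) * (∑ i, ψ (ω i)) ^ 2) / ((n : ℝ) * c) ^ 2 := by
        rw [Finset.sum_div]
    _ = ((n : ℝ) * ∑ x, p x * ψ x ^ 2) / ((n : ℝ) * c) ^ 2 := by
        rw [second_moment p hp1 ψ hψ]
    _ = (∑ x, p x * ψ x ^ 2) / (n * c ^ 2) := by
        field_simp
lemma card_highprob_le (hp0 : ∀ x, 0 ≤ p x) (hp1 : ∑ x, p x = 1) {b : ℝ} (hb : 0 < b) :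
    ((Finset.univ.filter (fun ω : Fin n → 𝓧 => b ≤ ∏ l, p (ω l))).card : ℝ) ≤ 1 / b := by
  have hw : ∀ ω : Fin n → 𝓧, (0:ℝ) ≤ ∏ l, p (ω l) :=
    fun ω => Finset.prod_nonneg fun l _ => hp0 _
  have h1 : ((Finset.univ.filter (fun ω : Fin n → 𝓧 => b ≤ ∏ l, p (ω l))).card : ℝ) * b
      ≤ ∑ ω ∈ Finset.univ.filter (fun ω : Fin n → 𝓧 => b ≤ ∏ l, p (ω l)), ∏ l, p (ω l) := by
    calc ((Finset.univ.filter (fun ω : Fin n → 𝓧 => b ≤ ∏ l, p (ω l))).card : ℝ) * b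
          = ∑ _ω ∈ Finset.univ.filter (fun ω : Fin n → 𝓧 => b ≤ ∏ l, p (ω l)), b := by
            rw [Finset.sum_const, nsmul_eq_mul]
        _ ≤ _ := Finset.sum_le_sum fun ω hω => (Finset.mem_filter.mp hω).2
  have h2 : ∑ ω ∈ Finset.univ.filter (fun ω : Fin n → 𝓧 => b ≤ ∏ l, p (ω l)), ∏ l, p (ω l)
      ≤ ∑ ω : Fin n → 𝓧, ∏ l, p (ω l) :=
    Finset.sum_le_sum_of_subset_of_nonneg (Finset.filter_subset _ _) fun ω _ _ => hw ω
  have h3 : ∑ ω : Fin n → 𝓧, ∏ l, p (ω l) = 1 := by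
    exact sum_w p hp1
  rw [le_div_iff₀ hb]
  linarith

lemma small_w_subset (hp0 : ∀ x, 0 ≤ p x) {τ : ℝ} (ω : Fin n → 𝓧)
    (hlt : ∏ l, p (ω l) < Real.exp (-(↑n * τ))) (hpos : 0 < ∏ l, p (ω l)) :
    (n : ℝ) * τ < ∑ i, -Real.log (p (ω i)) := by
  have hne : ∀ i : Fin n, p (ω i) ≠ 0 := by
    intro i hi
    have : ∏ l, p (ω l) = 0 := Finset.prod_eq_zero (Finset.mem_univ i) hi
    simp [this] at hpos
  have hlog : Real.log (∏ l, p (ω l)) = ∑ i, Real.log (p (ω i)) :=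
    Real.log_prod fun i _ => hne i
  have := Real.log_lt_log hpos hlt
  rw [Real.log_exp, hlog] at this
  have : -(∑ i, Real.log (p (ω i))) > (n:ℝ) * τ := by linarith
  simpa [Finset.sum_neg_distrib] using this
end aux

lemma pmf_toReal_nonneg {𝓧 : Type} (Q : PMF 𝓧) (x : 𝓧) : 0 ≤ (Q x).toReal :=
  ENNReal.toReal_nonneg

lemma pmf_sum_toReal {𝓧 : Type} [Fintype 𝓧] (Q : PMF 𝓧) : ∑ x, (Q x).toReal = 1 := by
  have h := Q.tsum_coe
  rw [tsum_fintype] at h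
  rw [← ENNReal.toReal_sum (fun x _ => Q.apply_ne_top x), h, ENNReal.toReal_one]

lemma core {𝓧 : Type} [Fintype 𝓧] (x0 : 𝓧) {K n : ℕ} (hn : 0 < n)
    (P : Fin K → PMF 𝓧) {c : ℝ} (hc : 0 < c) (Hmax : ℝ)
    (hH : ∀ k, ∑ x, ((P k) x).toReal * (-Real.log ((P k) x).toReal) ≤ Hmax) :
    ∃ (M : ℕ) (f : (Fin n → 𝓧) → Fin M) (g : Fin K → Fin M → (Fin n → 𝓧)),
      0 < M ∧
      (M : ℝ) ≤ (K : ℝ) * Real.exp (n * (Hmax + c)) + 1 ∧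
      ∀ k, iidProb (P k) n (fun ω => ω ≠ g k (f ω))
        ≤ (∑ x, ((P k) x).toReal * ((-Real.log ((P k) x).toReal)
            - ∑ y, ((P k) y).toReal * (-Real.log ((P k) y).toReal)) ^ 2) / (n * c ^ 2) := by
  set p : Fin K → 𝓧 → ℝ := fun k x => ((P k) x).toReal with hp
  have hp0 : ∀ k x, 0 ≤ p k x := fun k x => pmf_toReal_nonneg _ _
  have hp1 : ∀ k, ∑ x, p k x = 1 := fun k => pmf_sum_toReal _
  set b : ℝ := Real.exp (-(↑n * (Hmax + c))) with hbdef
  have hb : 0 < b := Real.exp_pos _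
  set T : Finset (Fin n → 𝓧) :=
    Finset.univ.filter (fun ω => ∃ k, b ≤ ∏ l, p k (ω l)) with hT
  let f : (Fin n → 𝓧) → Fin (T.card + 1) := fun ω =>
    if h : ω ∈ T then ⟨(T.equivFin ⟨ω, h⟩ : Fin T.card).1,
      Nat.lt_succ_of_lt (T.equivFin ⟨ω, h⟩).2⟩ else ⟨T.card, Nat.lt_succ_self _⟩
  let g : Fin (T.card + 1) → (Fin n → 𝓧) := fun m =>
    if h : (m : ℕ) < T.card
      then ((T.equivFin.symm ⟨(m : ℕ), h⟩ : {x // x ∈ T}) : Fin n → 𝓧) else fun _ => x0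
  have hdec : ∀ ω ∈ T, g (f ω) = ω := by
    intro ω h
    have hf : f ω = ⟨(T.equivFin ⟨ω, h⟩ : Fin T.card).1,
        Nat.lt_succ_of_lt (T.equivFin ⟨ω, h⟩).2⟩ := dif_pos h
    have hlt : ((f ω : Fin (T.card + 1)) : ℕ) < T.card := by
      rw [hf]; exact (T.equivFin ⟨ω, h⟩).2
    have : g (f ω) = ((T.equivFin.symm ⟨((f ω : Fin (T.card + 1)) : ℕ), hlt⟩ :
        {x // x ∈ T}) : Fin n → 𝓧) := dif_pos hlt
    rw [this]
    have : (⟨((f ω : Fin (T.card + 1)) : ℕ), hlt⟩ : Fin T.card) = T.equivFin ⟨ω, h⟩ := by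
      apply Fin.ext; simp [hf]
    rw [this, Equiv.symm_apply_apply]
  refine ⟨T.card + 1, f, fun _ => g, Nat.succ_pos _, ?_, ?_⟩
  · -- cardinality bound
    have hsub : T ⊆ Finset.univ.biUnion
        (fun k : Fin K => Finset.univ.filter (fun ω : Fin n → 𝓧 => b ≤ ∏ l, p k (ω l))) := by
      intro ω hω
      rw [hT, Finset.mem_filter] at hω
      obtain ⟨-, k, hk⟩ := hω
      exact Finset.mem_biUnion.mpr ⟨k, Finset.mem_univ _, Finset.mem_filter.mpr ⟨Finset.mem_univ _, hk⟩⟩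
    have hcard : (T.card : ℝ) ≤ (K : ℝ) * (1 / b) := by
      calc (T.card : ℝ)
          ≤ ((Finset.univ.biUnion (fun k : Fin K =>
              Finset.univ.filter (fun ω : Fin n → 𝓧 => b ≤ ∏ l, p k (ω l)))).card : ℝ) := by
            exact_mod_cast Finset.card_le_card hsub
        _ ≤ ∑ k : Fin K, ((Finset.univ.filter
              (fun ω : Fin n → 𝓧 => b ≤ ∏ l, p k (ω l))).card : ℝ) := by
            exact_mod_cast Finset.card_biUnion_le
        _ ≤ ∑ _k : Fin K, 1 / b :=
            Finset.sum_le_sum fun k _ => card_highprob_le (p k) (hp0 k) (hp1 k) hb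
        _ = (K : ℝ) * (1 / b) := by simp [mul_comm]
    have hib : 1 / b = Real.exp (↑n * (Hmax + c)) := by
      rw [hbdef, Real.exp_neg, one_div, inv_inv]
    push_cast
    rw [hib] at hcard
    linarith
  · -- error bound
    intro k
    set φ : 𝓧 → ℝ := fun x => -Real.log (p k x) with hφ
    have hμ : ∑ x, p k x * φ x ≤ Hmax := hH k
    have hw : ∀ ω : Fin n → 𝓧, (0:ℝ) ≤ ∏ l, p k (ω l) :=
      fun ω => Finset.prod_nonneg fun l _ => hp0 k _
    have key : ∀ ω : Fin n → 𝓧,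
        (if ω ≠ g (f ω) then ∏ l, p k (ω l) else 0)
          ≤ (if (n : ℝ) * ((∑ x, p k x * φ x) + c) < ∑ i, φ (ω i)
              then ∏ l, p k (ω l) else 0) := by
      intro ω
      by_cases h1 : ω = g (f ω)
      · rw [if_neg (by simpa using h1)]
        split <;> [exact hw ω; exact le_refl 0]
      · rw [if_pos h1]
        have hωT : ω ∉ T := fun hmem => h1 (hdec ω hmem).symm
        have hsmall : ∏ l, p k (ω l) < b := by
          by_contra hge
          exact hωT (Finset.mem_filter.mpr ⟨Finset.mem_univ _, ⟨k, le_of_not_gt hge⟩⟩)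
        rcases lt_or_eq_of_le (hw ω) with hpos | hzero
        · have := small_w_subset (p k) (hp0 k) ω (hbdef ▸ hsmall) hpos
          rw [if_pos (lt_of_le_of_lt
            (mul_le_mul_of_nonneg_left (by linarith) (Nat.cast_nonneg n)) this)]
        · rw [← hzero]
          split <;> simp
    calc iidProb (P k) n (fun ω => ω ≠ g (f ω))
        ≤ ∑ ω : Fin n → 𝓧, (if (n : ℝ) * ((∑ x, p k x * φ x) + c) < ∑ i, φ (ω i)
            then ∏ l, p k (ω l) else 0) := by
          rw [iidProb]
          refine Finset.sum_le_sum fun ω _ => ?_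
          convert key ω using 2
          rfl
      _ ≤ (∑ x, p k x * (φ x - ∑ y, p k y * φ y) ^ 2) / (n * c ^ 2) :=
          chebyshev (p k) (hp0 k) (hp1 k) φ hc hn

theorem universal_compression_without_side_information
    {𝓧 : Type} [Field 𝓧] [Fintype 𝓧] {K : ℕ} (hK : 0 < K)
    (P : Fin K → PMF 𝓧) {ε δ : ℝ} (hε : 0 < ε) (hδ : 0 < δ) :
    ∃ t m₀ : ℕ, 0 < t ∧ 0 < m₀ ∧ ∀ m : ℕ, m₀ ≤ m →
      ∃ (M : ℕ) (f : (Fin (t * 2 ^ m) → 𝓧) → Fin M)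
        (g : Fin K → Fin M → (Fin (t * 2 ^ m) → 𝓧)),
        0 < M ∧
        Real.log M / ((t * 2 ^ m : ℕ) * Real.log (Fintype.card 𝓧))
          < Finset.univ.sup' (Finset.univ_nonempty_iff.mpr ⟨⟨0, hK⟩⟩)
              (fun k => pmfEntropy (P k) / Real.log (Fintype.card 𝓧)) + δ ∧
        ∀ k : Fin K, iidProb (P k) (t * 2 ^ m) (fun ω => ω ≠ g k (f ω)) < ε := by
  have hne : (Finset.univ : Finset (Fin K)).Nonempty := ⟨⟨0, hK⟩, Finset.mem_univ _⟩
  -- alphabet size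
  have hq : 1 < Fintype.card 𝓧 := Fintype.one_lt_card
  set L : ℝ := Real.log (Fintype.card 𝓧) with hLdef
  have hL : 0 < L := Real.log_pos (by exact_mod_cast hq)
  -- pmf basics
  have hple1 : ∀ (k : Fin K) (x : 𝓧), ((P k) x).toReal ≤ 1 := by
    intro k x
    have h1 : (P k) x ≤ 1 := PMF.coe_le_one _ _
    calc ((P k) x).toReal ≤ (1 : ℝ≥0∞).toReal :=
          ENNReal.toReal_mono ENNReal.one_ne_top h1
      _ = 1 := ENNReal.toReal_one
  -- entropy identities
  have hent : ∀ k : Fin K, ∑ x, ((P k) x).toReal * (-Real.log ((P k) x).toReal)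
      = pmfEntropy (P k) := by
    intro k
    refine Finset.sum_congr rfl fun x _ => ?_
    rw [Real.negMulLog]; ring
  have hent0 : ∀ k : Fin K, 0 ≤ pmfEntropy (P k) := by
    intro k
    refine Finset.sum_nonneg fun x _ => Real.negMulLog_nonneg ENNReal.toReal_nonneg (hple1 k x)
  set H : Fin K → ℝ := fun k => pmfEntropy (P k) with hHdef
  set Hmax : ℝ := Finset.univ.sup' hne H with hHmaxdef
  have hHk : ∀ k, H k ≤ Hmax := fun k => Finset.le_sup' H (Finset.mem_univ k)
  have hHmax0 : 0 ≤ Hmax := le_trans (hent0 ⟨0, hK⟩) (hHk ⟨0, hK⟩)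
  set c : ℝ := δ / 2 * L with hcdef
  have hc : 0 < c := by positivity
  set W : Fin K → ℝ := fun k => ∑ x, ((P k) x).toReal * ((-Real.log ((P k) x).toReal)
      - ∑ y, ((P k) y).toReal * (-Real.log ((P k) y).toReal)) ^ 2 with hWdef
  have hW0 : ∀ k, 0 ≤ W k := fun k =>
    Finset.sum_nonneg fun x _ => mul_nonneg ENNReal.toReal_nonneg (sq_nonneg _)
  set Vmax : ℝ := Finset.univ.sup' hne W with hVdef
  have hVk : ∀ k, W k ≤ Vmax := fun k => Finset.le_sup' W (Finset.mem_univ k)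
  have hV0 : 0 ≤ Vmax := le_trans (hW0 ⟨0, hK⟩) (hVk ⟨0, hK⟩)
  -- choose threshold
  obtain ⟨N₀, hN₀⟩ := exists_nat_gt (max (Vmax / (ε * c ^ 2)) (2 * Real.log (K + 1) / (δ * L)))
  refine ⟨1, max N₀ 1, Nat.one_pos, lt_of_lt_of_le Nat.one_pos (le_max_right _ _), ?_⟩
  intro m hm
  set n : ℕ := 1 * 2 ^ m with hndef
  have hn : 0 < n := by positivity
  have hnm : (max N₀ 1 : ℕ) ≤ n := by
    calc max N₀ 1 ≤ m := hm
      _ ≤ 2 ^ m := Nat.le_of_lt (Nat.lt_two_pow_self (n := m))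
      _ = n := (one_mul _).symm
  have hnN : (N₀ : ℝ) ≤ (n : ℝ) := by
    exact_mod_cast le_trans (le_max_left N₀ 1) hnm
  have hnR : (0:ℝ) < (n:ℝ) := by exact_mod_cast hn
  -- apply core
  obtain ⟨M, f, g, hM0, hMle, herr⟩ := core (0 : 𝓧) hn P hc Hmax
    (fun k => (hent k) ▸ hHk k)
  refine ⟨M, f, g, hM0, ?_, ?_⟩
  · -- rate bound
    have hexp1 : (1:ℝ) ≤ Real.exp ((n:ℝ) * (Hmax + c)) := by
      rw [← Real.exp_zero]
      exact Real.exp_le_exp.mpr (by positivity)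
    have hlogM : Real.log M ≤ Real.log (K + 1) + (n:ℝ) * (Hmax + c) := by
      have h1 : (M:ℝ) ≤ ((K:ℝ) + 1) * Real.exp ((n:ℝ) * (Hmax + c)) := by
        calc (M:ℝ) ≤ (K : ℝ) * Real.exp ((n:ℝ) * (Hmax + c)) + 1 := hMle
          _ ≤ (K : ℝ) * Real.exp ((n:ℝ) * (Hmax + c)) + Real.exp ((n:ℝ) * (Hmax + c)) := by
              linarith
          _ = ((K:ℝ) + 1) * Real.exp ((n:ℝ) * (Hmax + c)) := by ring
      calc Real.log M ≤ Real.log (((K:ℝ) + 1) * Real.exp ((n:ℝ) * (Hmax + c))) :=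
            Real.log_le_log (by exact_mod_cast hM0) h1
        _ = Real.log ((K:ℝ) + 1) + (n:ℝ) * (Hmax + c) := by
            rw [Real.log_mul (by positivity) (Real.exp_ne_zero _), Real.log_exp]
        _ = Real.log (K + 1) + (n:ℝ) * (Hmax + c) := by norm_num
    have hKlog : Real.log ((K:ℝ) + 1) < δ / 2 * ((n:ℝ) * L) := by
      have h2 : 2 * Real.log (K + 1) / (δ * L) < (n:ℝ) :=
        lt_of_le_of_lt (le_max_right _ _) (lt_of_lt_of_le hN₀ hnN)
      rw [div_lt_iff₀ (by positivity)] at h2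
      push_cast at h2 ⊢
      nlinarith
    -- conclude
    have hsup : Hmax / L ≤ Finset.univ.sup' hne (fun k => pmfEntropy (P k) / L) := by
      obtain ⟨k₀, -, hk₀⟩ := Finset.exists_mem_eq_sup' hne H
      calc Hmax / L = H k₀ / L := by rw [hHmaxdef, hk₀]
        _ ≤ _ := Finset.le_sup' (fun k => pmfEntropy (P k) / L) (Finset.mem_univ k₀)
    have hrate : Real.log M / ((n:ℝ) * L) < Hmax / L + δ := by
      rw [div_lt_iff₀ (by positivity)]
      have : (Hmax / L + δ) * ((n:ℝ) * L) = (n:ℝ) * Hmax + δ * ((n:ℝ) * L) := by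
        field_simp
      rw [this]
      have hKlog' : Real.log ((K:ℝ) + 1) < δ / 2 * ((n:ℝ) * L) := hKlog
      push_cast at hlogM
      nlinarith [hlogM]
    calc Real.log M / ((n:ℕ) * L) < Hmax / L + δ := by push_cast; exact hrate
      _ ≤ _ := by linarith [hsup]
  · -- error bound
    intro k
    have h1 : iidProb (P k) n (fun ω => ω ≠ g k (f ω)) ≤ W k / ((n:ℝ) * c ^ 2) := herr k
    have h2 : W k / ((n:ℝ) * c ^ 2) < ε := by
      rw [div_lt_iff₀ (by positivity)]
      have h3 : Vmax / (ε * c ^ 2) < (n:ℝ) :=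
        lt_of_le_of_lt (le_max_left _ _) (lt_of_lt_of_le hN₀ hnN)
      rw [div_lt_iff₀ (by positivity)] at h3
      nlinarith [hVk k]
    exact lt_of_le_of_lt h1 h2
end

section
/- Let 𝒳 = {0,1}, let 𝒴₁,…,𝒴_K be finite sets, and let (X,Y₁,…,Y_K) have joint distribution P on 𝒳×𝒴₁×⋯×𝒴_K. Let 𝒰 = {0,1}, let 𝒱₁,…,𝒱_K be finite sets, and let W(v₁,…,v_K|u) be a discrete memoryless broadcast channel from 𝒰 to 𝒱₁×⋯×𝒱_K. Let κ > 0 and suppose there exists a probability distribution P_U on 𝒰 such that H(X|Y_k) < κ·I(U;V_k) for every 1 ≤ k ≤ K, where (U,V₁,…,V_K) is distributed according to P_U(u)·W(v₁,…,v_K|u). Then for every ε > 0 there exist positive integers n and l with l/n < κ + ε, an encoder f : 𝒳ⁿ → 𝒰^l, and decoders g_k : 𝒱_k^l × 𝒴_kⁿ → 𝒳ⁿ for 1 ≤ k ≤ K, such that Pr[X^{1:n} ≠ g_k(V_k^{1:l}, Y_k^{1:n})] < ε for every k, where (X^{1:n}, Y₁^{1:n}, …, Y_K^{1:n}) are n i.i.d.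 copies of (X,Y₁,…,Y_K), U^{1:l} = f(X^{1:n}), and (V₁^{1:l},…,V_K^{1:l}) is obtained by passing each coordinate of U^{1:l} independently through the channel W. -/
set_option linter.unusedSectionVars false
set_option linter.unusedVariables false
set_option maxHeartbeats 1000000

open scoped BigOperators

/-- Conditional entropy `H(X | Y_k)` (in nats), computed as `H(X, Y_k) - H(Y_k)`
from the joint distribution `P` of `(X, Y_1, …, Y_K)`. -/
noncomputable def condH {K : ℕ} {𝓨 : Fin K → Type} [∀ k, Fintype (𝓨 k)]
    (P : PMF (Bool × ∀ k, 𝓨 k)) (k : Fin K) : ℝ :=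
  pmfEntropy (P.map fun p => (p.1, p.2 k)) - pmfEntropy (P.map fun p => p.2 k)

/-- Mutual information `I(U; V_k)` (in nats) where `(U, V_1, …, V_K)` is
distributed according to `P_U(u) · W(v_1, …, v_K | u)`, computed as
`H(U) + H(V_k) - H(U, V_k)`. -/
noncomputable def mutualInfo {K : ℕ} {𝓥 : Fin K → Type} [∀ k, Fintype (𝓥 k)]
    (PU : PMF Bool) (W : Bool → PMF (∀ k, 𝓥 k)) (k : Fin K) : ℝ :=
  pmfEntropy ((PU.bind fun u => (W u).map fun v => (u, v)).map fun p => p.1)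
    + pmfEntropy ((PU.bind fun u => (W u).map fun v => (u, v)).map fun p => p.2 k)
    - pmfEntropy ((PU.bind fun u => (W u).map fun v => (u, v)).map fun p => (p.1, p.2 k))

open Classical in
/-- Error probability of decoder `k`: the probability that, when
`(X^{1:n}, Y^{1:n})` is drawn i.i.d. from `P`, the sequence `U^{1:l} = f(X^{1:n})`
is sent through the memoryless broadcast channel `W` (coordinatewise,
independently), and decoder `k` applies `g` to its channel output together with
its side information `Y_k^{1:n}`, the result differs from `X^{1:n}`. -/
noncomputable def bcErrProb {K : ℕ} {𝓨 𝓥 : Fin K → Type}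
    [∀ k, Fintype (𝓨 k)] [∀ k, Fintype (𝓥 k)]
    (P : PMF (Bool × ∀ k, 𝓨 k)) (W : Bool → PMF (∀ k, 𝓥 k)) {n l : ℕ}
    (f : (Fin n → Bool) → (Fin l → Bool)) (k : Fin K)
    (g : (Fin l → 𝓥 k) × (Fin n → 𝓨 k) → (Fin n → Bool)) : ℝ :=
  ∑ ω : Fin n → Bool × (∀ j, 𝓨 j), ∑ v : Fin l → (∀ j, 𝓥 j),
    if (fun i => (ω i).1) ≠ g ((fun a => v a k), fun i => (ω i).2 k) then
      (∏ i, (P (ω i)).toReal) * ∏ a, ((W (f (fun i => (ω i).1) a)) (v a)).toReal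
    else 0


namespace SWAux

open Finset Real


lemma sum_pi_prod {ι : Type} [Fintype ι] [DecidableEq ι] {β : ι → Type}
    [∀ i, Fintype (β i)] (F : ∀ i, β i → ℝ) :
    ∑ ω : ∀ i, β i, ∏ i, F i (ω i) = ∏ i, ∑ b, F i b :=
  (Fintype.prod_sum F).symm

lemma pexp_factor {ι : Type} [Fintype ι] [DecidableEq ι] {β : ι → Type}
    [∀ i, Fintype (β i)] (q : ∀ i, β i → ℝ) (hq1 : ∀ i, ∑ b, q i b = 1)
    (S : Finset ι) (G : ∀ i, β i → ℝ) :
    ∑ ω : ∀ i, β i, (∏ i, q i (ω i)) * ∏ i ∈ S, G i (ω i)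
      = ∏ i ∈ S, ∑ b, q i b * G i b := by
  have key : ∀ ω : ∀ i, β i, (∏ i, q i (ω i)) * ∏ i ∈ S, G i (ω i)
      = ∏ i, (q i (ω i) * if i ∈ S then G i (ω i) else 1) := by
    intro ω
    rw [Finset.prod_mul_distrib]
    congr 1
    exact (Fintype.prod_ite_mem S (fun i => G i (ω i))).symm
  calc ∑ ω : ∀ i, β i, (∏ i, q i (ω i)) * ∏ i ∈ S, G i (ω i)
      = ∑ ω : ∀ i, β i, ∏ i, (q i (ω i) * if i ∈ S then G i (ω i) else 1) := by
        exact Finset.sum_congr rfl (fun ω _ => key ω)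
    _ = ∏ i, ∑ b, (q i b * if i ∈ S then G i b else 1) :=
        sum_pi_prod (fun i b => q i b * if i ∈ S then G i b else 1)
    _ = ∏ i, (if i ∈ S then ∑ b, q i b * G i b else 1) := by
        apply Finset.prod_congr rfl
        intro i _
        by_cases h : i ∈ S
        · simp [h]
        · simp [h, hq1 i]
    _ = ∏ i ∈ S, ∑ b, q i b * G i b := Fintype.prod_ite_mem S _

lemma pexp_const {ι : Type} [Fintype ι] [DecidableEq ι] {β : ι → Type}
    [∀ i, Fintype (β i)] (q : ∀ i, β i → ℝ) (hq1 : ∀ i, ∑ b, q i b = 1) :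
    ∑ ω : ∀ i, β i, (∏ i, q i (ω i)) = 1 := by
  have := pexp_factor q hq1 ∅ (fun _ _ => 1)
  simpa using this

lemma pexp_single {ι : Type} [Fintype ι] [DecidableEq ι] {β : Type} [Fintype β]
    (q : β → ℝ) (hq1 : ∑ b, q b = 1) (i : ι) (c : β → ℝ) :
    ∑ ω : ι → β, (∏ t, q (ω t)) * c (ω i) = ∑ b, q b * c b := by
  have := pexp_factor (ι := ι) (β := fun _ => β) (fun _ => q) (fun _ => hq1)
    {i} (fun _ => c)
  simpa using this

lemma pexp_pair {ι : Type} [Fintype ι] [DecidableEq ι] {β : Type} [Fintype β]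
    (q : β → ℝ) (hq1 : ∑ b, q b = 1) {i j : ι} (hij : i ≠ j) (c d : β → ℝ) :
    ∑ ω : ι → β, (∏ t, q (ω t)) * (c (ω i) * d (ω j))
      = (∑ b, q b * c b) * (∑ b, q b * d b) := by
  have h := pexp_factor (ι := ι) (β := fun _ => β) (fun _ => q) (fun _ => hq1)
    {i, j} (fun t => if t = i then c else d)
  have hji : j ≠ i := fun h' => hij h'.symm
  rw [Finset.prod_pair hij] at h
  rw [if_pos rfl, if_neg hji] at h
  rw [← h]
  apply Finset.sum_congr rfl
  intro ω _
  congr 1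
  rw [Finset.prod_pair hij]
  simp [hji]



lemma sum_comp_eq {γ γ' : Type} [Fintype γ] [Fintype γ'] [DecidableEq γ']
    (q : γ → ℝ) (m : γ → γ') (F : γ' → ℝ) :
    ∑ a, q a * F (m a) = ∑ b, (∑ a, if m a = b then q a else 0) * F b := by
  have : ∀ b : γ', (∑ a, if m a = b then q a else 0) * F b
      = ∑ a, if m a = b then q a * F b else 0 := by
    intro b
    rw [Finset.sum_mul]
    exact Finset.sum_congr rfl (fun a _ => by split <;> simp)
  rw [Finset.sum_congr rfl (fun b _ => this b), Finset.sum_comm]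
  apply Finset.sum_congr rfl
  intro a _
  simp

lemma pmf_sum_one {γ : Type} [Fintype γ] (Q : PMF γ) : ∑ a, (Q a).toReal = 1 := by
  have h := Q.tsum_coe
  rw [tsum_fintype] at h
  rw [← ENNReal.toReal_sum (fun a _ => Q.apply_ne_top a), h, ENNReal.toReal_one]

lemma pmf_map_toReal {γ γ' : Type} [Fintype γ] [DecidableEq γ'] (Q : PMF γ)
    (m : γ → γ') (b : γ') :
    ((Q.map m) b).toReal = ∑ a, if m a = b then (Q a).toReal else 0 := by
  rw [PMF.map_apply, tsum_fintype]
  rw [ENNReal.toReal_sum]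
  · apply Finset.sum_congr rfl
    intro a _
    by_cases h : m a = b
    · simp [h]
    · simp [h, Ne.symm h]
  · intro a _
    split
    · exact Q.apply_ne_top a
    · exact ENNReal.zero_ne_top

lemma pmf_bind_map_apply {γ : Type} (PU : PMF Bool) (W : Bool → PMF γ)
    (u : Bool) (vv : γ) :
    (PU.bind fun u' => (W u').map fun v => (u', v)) (u, vv) = PU u * W u vv := by
  rw [PMF.bind_apply]
  have h1 : ∀ u', ((W u').map fun v => (u', v)) (u, vv)
      = if u = u' then W u' vv else 0 := by
    intro u'
    rw [PMF.map_apply]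
    by_cases h : u = u'
    · subst h
      rw [if_pos rfl, tsum_eq_single vv]
      · simp
      · intro v' hv'
        simp [Ne.symm hv']
    · rw [if_neg h]
      apply ENNReal.tsum_eq_zero.2
      intro v'
      simp only [Prod.mk.injEq, ite_eq_right_iff, and_imp]
      intro h1 _; exact absurd h1 h
  calc ∑' u', PU u' * ((W u').map fun v => (u', v)) (u, vv)
      = ∑' u', PU u' * if u = u' then W u' vv else 0 := by
        congr 1; ext u'; rw [h1]
    _ = PU u * W u vv := by
        rw [tsum_eq_single u]
        · simp
        · intro u' hu'; simp [Ne.symm hu']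

lemma pmf_bind_map_toReal {γ : Type} (PU : PMF Bool) (W : Bool → PMF γ)
    (u : Bool) (vv : γ) :
    ((PU.bind fun u' => (W u').map fun v => (u', v)) (u, vv)).toReal
      = (PU u).toReal * (W u vv).toReal := by
  rw [pmf_bind_map_apply, ENNReal.toReal_mul]

lemma sq_moment {β : Type} [Fintype β] (q : β → ℝ) (hq1 : ∑ b, q b = 1)
    {n : ℕ} (c : β → ℝ) (hc : ∑ b, q b * c b = 0) :
    ∑ ω : Fin n → β, (∏ t, q (ω t)) * (∑ i, c (ω i))^2
      = n * ∑ b, q b * (c b)^2 := by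
  have expand : ∀ ω : Fin n → β, (∏ t, q (ω t)) * (∑ i, c (ω i))^2
      = ∑ i, ∑ j, (∏ t, q (ω t)) * (c (ω i) * c (ω j)) := by
    intro ω
    rw [sq, Finset.sum_mul_sum]
    rw [Finset.mul_sum]
    exact Finset.sum_congr rfl (fun i _ => by rw [Finset.mul_sum])
  rw [Finset.sum_congr rfl (fun ω _ => expand ω)]
  rw [Finset.sum_comm]
  have inner : ∀ i : Fin n, ∑ ω : Fin n → β, ∑ j, (∏ t, q (ω t)) * (c (ω i) * c (ω j))
      = ∑ b, q b * (c b)^2 := by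
    intro i
    rw [Finset.sum_comm]
    have term : ∀ j : Fin n, ∑ ω : Fin n → β, (∏ t, q (ω t)) * (c (ω i) * c (ω j))
        = if i = j then ∑ b, q b * (c b)^2 else 0 := by
      intro j
      by_cases h : i = j
      · subst h
        rw [if_pos rfl]
        have := pexp_single q hq1 i (fun b => c b * c b)
        calc ∑ ω : Fin n → β, (∏ t, q (ω t)) * (c (ω i) * c (ω i))
            = ∑ b, q b * (c b * c b) := pexp_single q hq1 i (fun b => c b * c b)
          _ = ∑ b, q b * (c b)^2 := by
              exact Finset.sum_congr rfl (fun b _ => by ring)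
      · rw [if_neg h, pexp_pair q hq1 h c c, hc, mul_zero]
    rw [Finset.sum_congr rfl (fun j _ => term j)]
    simp
  rw [Finset.sum_congr rfl (fun i _ => inner i)]
  simp [mul_comm]

lemma chebyshev {β : Type} [Fintype β] (q : β → ℝ) (hq0 : ∀ b, 0 ≤ q b)
    (hq1 : ∑ b, q b = 1) (h : β → ℝ) {n : ℕ} (hn : 0 < n) {δ : ℝ} (hδ : 0 < δ) :
    ∑ ω : Fin n → β, (∏ t, q (ω t)) *
        (if (n : ℝ) * δ ≤ |∑ i, h (ω i) - n * (∑ b, q b * h b)| then 1 else 0)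
      ≤ (∑ b, q b * (h b - ∑ b', q b' * h b')^2) / (n * δ^2) := by
  set μ := ∑ b, q b * h b with hμ
  set c : β → ℝ := fun b => h b - μ with hc
  have hc0 : ∑ b, q b * c b = 0 := by
    simp only [hc, mul_sub, Finset.sum_sub_distrib, ← Finset.sum_mul, hq1]
    ring
  have hprodnn : ∀ ω : Fin n → β, (0:ℝ) ≤ ∏ t, q (ω t) :=
    fun ω => Finset.prod_nonneg (fun t _ => hq0 (ω t))
  have npos : (0:ℝ) < n := by exact_mod_cast hn
  have hnd : (0:ℝ) < (n * δ)^2 := by positivity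
  have pointwise : ∀ ω : Fin n → β,
      (if (n : ℝ) * δ ≤ |∑ i, h (ω i) - n * μ| then (1:ℝ) else 0)
        ≤ (∑ i, c (ω i))^2 / (n * δ)^2 := by
    intro ω
    have hsum : ∑ i, c (ω i) = ∑ i, h (ω i) - n * μ := by
      simp [hc, Finset.sum_sub_distrib, Finset.card_univ]
    split
    · rename_i hdev
      rw [le_div_iff₀ hnd, one_mul, hsum, ← sq_abs (∑ i, h (ω i) - (n:ℝ) * μ)]
      exact pow_le_pow_left₀ (by positivity) hdev 2
    · positivity
  calc ∑ ω : Fin n → β, (∏ t, q (ω t)) *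
        (if (n : ℝ) * δ ≤ |∑ i, h (ω i) - n * μ| then 1 else 0)
      ≤ ∑ ω : Fin n → β, (∏ t, q (ω t)) * ((∑ i, c (ω i))^2 / (n * δ)^2) := by
        apply Finset.sum_le_sum
        intro ω _
        exact mul_le_mul_of_nonneg_left (pointwise ω) (hprodnn ω)
    _ = (∑ ω : Fin n → β, (∏ t, q (ω t)) * (∑ i, c (ω i))^2) / (n * δ)^2 := by
        rw [Finset.sum_div]
        exact Finset.sum_congr rfl (fun ω _ => by ring)
    _ = (n * ∑ b, q b * (c b)^2) / (n * δ)^2 := by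
        rw [sq_moment q hq1 c hc0]
    _ = (∑ b, q b * (c b)^2) / (n * δ^2) := by
        field_simp
    _ = (∑ b, q b * (h b - ∑ b', q b' * h b')^2) / (n * δ^2) := rfl

/-- entropy of a pushforward as a mean over the base. -/
lemma entropy_eq_mean {γ γ' : Type} [Fintype γ] [Fintype γ'] [DecidableEq γ']
    (Q : PMF γ) (m : γ → γ') :
    ∑ a, (Q a).toReal * (-Real.log (((Q.map m) (m a)).toReal))
      = pmfEntropy (Q.map m) := by
  rw [sum_comp_eq (fun a => (Q a).toReal) m (fun b => -Real.log (((Q.map m) b).toReal))]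
  unfold pmfEntropy
  apply Finset.sum_congr rfl
  intro b _
  rw [← pmf_map_toReal Q m b, Real.negMulLog]
  ring

lemma marg_le {γ γ' : Type} [Fintype γ] [DecidableEq γ'] (Q : PMF γ)
    (m : γ → γ') (a : γ) : (Q a).toReal ≤ ((Q.map m) (m a)).toReal := by
  rw [pmf_map_toReal Q m (m a)]
  have := Finset.single_le_sum (f := fun a' => if m a' = m a then (Q a').toReal else 0)
    (fun a' _ => by positivity) (Finset.mem_univ a)
  simpa using this

lemma fst_marg {γ A B : Type} [Fintype γ] [Fintype A] [DecidableEq A] [DecidableEq B]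
    (Q : PMF γ) (f : γ → A) (g : γ → B) (y : B) :
    ∑ x : A, ((Q.map fun a => (f a, g a)) (x, y)).toReal = ((Q.map g) y).toReal := by
  simp only [pmf_map_toReal]
  rw [Finset.sum_comm]
  apply Finset.sum_congr rfl
  intro a _
  simp only [Prod.ext_iff]
  rw [Finset.sum_congr rfl (fun b (_ : b ∈ Finset.univ) => by
    rw [show (if f a = b ∧ g a = y then (Q a).toReal else 0)
      = if f a = b then (if g a = y then (Q a).toReal else 0) else 0 by
        by_cases h1 : f a = b <;> by_cases h2 : g a = y <;> simp [h1, h2]]),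
    Finset.sum_ite_eq Finset.univ (f a) (fun _ => if g a = y then (Q a).toReal else 0)]
  simp

lemma snd_marg {γ A B : Type} [Fintype γ] [Fintype B] [DecidableEq A] [DecidableEq B]
    (Q : PMF γ) (f : γ → A) (g : γ → B) (x : A) :
    ∑ y : B, ((Q.map fun a => (f a, g a)) (x, y)).toReal = ((Q.map f) x).toReal := by
  simp only [pmf_map_toReal]
  rw [Finset.sum_comm]
  apply Finset.sum_congr rfl
  intro a _
  simp only [Prod.ext_iff]
  rw [Finset.sum_congr rfl (fun b (_ : b ∈ Finset.univ) => by
    rw [show (if f a = x ∧ g a = b then (Q a).toReal else 0)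
      = if g a = b then (if f a = x then (Q a).toReal else 0) else 0 by
        by_cases h1 : f a = x <;> by_cases h2 : g a = b <;> simp [h1, h2]]),
    Finset.sum_ite_eq Finset.univ (g a) (fun _ => if f a = x then (Q a).toReal else 0)]
  simp

lemma exp_le_prod {n : ℕ} (f : Fin n → ℝ) (hf : ∀ i, 0 < f i) {c : ℝ}
    (hc : ∑ i, -Real.log (f i) ≤ c) : Real.exp (-c) ≤ ∏ i, f i := by
  have : ∏ i, f i = Real.exp (∑ i, Real.log (f i)) := by
    rw [Real.exp_sum]
    exact (Finset.prod_congr rfl (fun i _ => (Real.exp_log (hf i)).symm))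
  rw [this]
  apply Real.exp_le_exp.2
  have : ∑ i, Real.log (f i) = -∑ i, -Real.log (f i) := by
    rw [← Finset.sum_neg_distrib]
    exact Finset.sum_congr rfl (fun i _ => by ring)
  rw [this]
  linarith

lemma prod_le_exp {n : ℕ} (f : Fin n → ℝ) (hf : ∀ i, 0 < f i) {c : ℝ}
    (hc : c ≤ ∑ i, -Real.log (f i)) : ∏ i, f i ≤ Real.exp (-c) := by
  have : ∏ i, f i = Real.exp (∑ i, Real.log (f i)) := by
    rw [Real.exp_sum]
    exact (Finset.prod_congr rfl (fun i _ => (Real.exp_log (hf i)).symm))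
  rw [this]
  apply Real.exp_le_exp.2
  have : ∑ i, Real.log (f i) = -∑ i, -Real.log (f i) := by
    rw [← Finset.sum_neg_distrib]
    exact Finset.sum_congr rfl (fun i _ => by ring)
  rw [this]
  linarith

open Classical in
/-- bound on the number of conditionally typical sequences. -/
lemma count_typ {X Y : Type} [Fintype X] [Fintype Y] (p : X × Y → ℝ) (pY : Y → ℝ)
    (hp0 : ∀ z, 0 ≤ p z) (hmarg : ∀ y', ∑ x, p (x, y') = pY y')
    {n : ℕ} (Hxy Hy δ : ℝ) (y : Fin n → Y) :
    ((Finset.univ.filter (fun x : Fin n → X =>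
        (∀ i, 0 < p (x i, y i)) ∧ (∑ i, -Real.log (p (x i, y i))) ≤ n * (Hxy + δ) ∧
        n * (Hy - δ) ≤ ∑ i, -Real.log (pY (y i)))).card : ℝ)
      ≤ Real.exp (n * (Hxy - Hy + 2*δ)) := by
  set T := Finset.univ.filter (fun x : Fin n → X =>
        (∀ i, 0 < p (x i, y i)) ∧ (∑ i, -Real.log (p (x i, y i))) ≤ n * (Hxy + δ) ∧
        n * (Hy - δ) ≤ ∑ i, -Real.log (pY (y i))) with hT
  rcases Finset.eq_empty_or_nonempty T with h | ⟨x₀, hx₀⟩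
  · rw [h]; simp [Real.exp_pos, le_of_lt (Real.exp_pos _)]
  · have hx₀' := (Finset.mem_filter.1 hx₀).2
    have hpos : ∀ i, 0 < p (x₀ i, y i) := hx₀'.1
    have hyc : n * (Hy - δ) ≤ ∑ i, -Real.log (pY (y i)) := hx₀'.2.2
    have hpYpos : ∀ i, 0 < pY (y i) := by
      intro i
      rw [← hmarg (y i)]
      have h1 : p (x₀ i, y i) ≤ ∑ x, p (x, y i) :=
        Finset.single_le_sum (f := fun x => p (x, y i)) (fun x _ => hp0 _)
          (Finset.mem_univ _)
      linarith [hpos i]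
    -- each typical x has prod p ≥ exp(-(n(Hxy+δ)))
    have flow : ∀ x ∈ T, Real.exp (-(n * (Hxy + δ))) ≤ ∏ i, p (x i, y i) := by
      intro x hx
      have hx' := (Finset.mem_filter.1 hx).2
      exact exp_le_prod _ hx'.1 hx'.2.1
    have fsum : ∑ x ∈ T, ∏ i, p (x i, y i) ≤ Real.exp (-(n * (Hy - δ))) := by
      calc ∑ x ∈ T, ∏ i, p (x i, y i)
          ≤ ∑ x : Fin n → X, ∏ i, p (x i, y i) :=
            Finset.sum_le_sum_of_subset_of_nonneg (Finset.subset_univ T)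
              (fun x _ _ => Finset.prod_nonneg (fun i _ => hp0 _))
        _ = ∏ i, ∑ b, p (b, y i) := sum_pi_prod (fun i b => p (b, y i))
        _ = ∏ i, pY (y i) := Finset.prod_congr rfl (fun i _ => hmarg (y i))
        _ ≤ Real.exp (-(n * (Hy - δ))) := prod_le_exp _ hpYpos hyc
    have hcard : (T.card : ℝ) * Real.exp (-(n * (Hxy + δ)))
        ≤ Real.exp (-(n * (Hy - δ))) := by
      calc (T.card : ℝ) * Real.exp (-(n * (Hxy + δ)))
          = ∑ _x ∈ T, Real.exp (-(n * (Hxy + δ))) := by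
            rw [Finset.sum_const, nsmul_eq_mul]
        _ ≤ ∑ x ∈ T, ∏ i, p (x i, y i) := Finset.sum_le_sum flow
        _ ≤ _ := fsum
    have hexp : (0:ℝ) < Real.exp (-(n * (Hxy + δ))) := Real.exp_pos _
    rw [← le_div_iff₀ hexp] at hcard
    calc (T.card : ℝ) ≤ Real.exp (-(n * (Hy - δ))) / Real.exp (-(n * (Hxy + δ))) := hcard
      _ = Real.exp (n * (Hxy - Hy + 2*δ)) := by
          rw [← Real.exp_sub]
          congr 1
          ring

open Classical in
/-- probability that an independent random codeword looks jointly typical. -/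
lemma code_typ {U V : Type} [Fintype U] [Fintype V] (pUV : U × V → ℝ)
    (pU : U → ℝ) (pV : V → ℝ) (h0 : ∀ z, 0 ≤ pUV z)
    (hmargU : ∀ u, ∑ v', pUV (u, v') = pU u) (hmargV : ∀ v', ∑ u, pUV (u, v') = pV v')
    {l : ℕ} (Huv Hu Hv δ : ℝ) (v : Fin l → V) :
    ∑ u : Fin l → U, (∏ a, pU (u a)) *
      (if (∀ a, 0 < pUV (u a, v a)) ∧ (∑ a, -Real.log (pUV (u a, v a))) ≤ l * (Huv + δ) ∧
          l * (Hu - δ) ≤ (∑ a, -Real.log (pU (u a))) ∧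
          l * (Hv - δ) ≤ (∑ a, -Real.log (pV (v a))) then (1:ℝ) else 0)
      ≤ Real.exp (-(l * (Hu + Hv - Huv - 3*δ))) := by
  have hU0 : ∀ u, 0 ≤ pU u := by
    intro u; rw [← hmargU u]; exact Finset.sum_nonneg (fun v' _ => h0 _)
  set Tp := fun u : Fin l → U =>
      (∀ a, 0 < pUV (u a, v a)) ∧ (∑ a, -Real.log (pUV (u a, v a))) ≤ l * (Huv + δ) ∧
        l * (Hu - δ) ≤ (∑ a, -Real.log (pU (u a))) ∧
        l * (Hv - δ) ≤ (∑ a, -Real.log (pV (v a))) with hTp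
  have step1 : ∑ u : Fin l → U, (∏ a, pU (u a)) * (if Tp u then (1:ℝ) else 0)
      = ∑ u ∈ Finset.univ.filter Tp, ∏ a, pU (u a) := by
    rw [Finset.sum_filter]
    exact Finset.sum_congr rfl (fun u _ => by split <;> simp)
  rw [step1]
  set T := Finset.univ.filter Tp with hT
  rcases Finset.eq_empty_or_nonempty T with h | ⟨u₀, hu₀⟩
  · rw [h]; simp [le_of_lt (Real.exp_pos _)]
  · have hu₀' := (Finset.mem_filter.1 hu₀).2
    have hpos₀ : ∀ a, 0 < pUV (u₀ a, v a) := hu₀'.1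
    have hpVpos : ∀ a, 0 < pV (v a) := by
      intro a
      rw [← hmargV (v a)]
      have h1 : pUV (u₀ a, v a) ≤ ∑ u', pUV (u', v a) :=
        Finset.single_le_sum (f := fun u' => pUV (u', v a)) (fun u' _ => h0 _)
          (Finset.mem_univ _)
      linarith [hpos₀ a]
    have hvc : l * (Hv - δ) ≤ ∑ a, -Real.log (pV (v a)) := hu₀'.2.2.2
    -- positivity of pU along members
    have hpUpos : ∀ u ∈ T, ∀ a, 0 < pU (u a) := by
      intro u hu a
      have hu' := (Finset.mem_filter.1 hu).2
      have h1 : pUV (u a, v a) ≤ ∑ v', pUV (u a, v') :=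
        Finset.single_le_sum (f := fun v' => pUV (u a, v')) (fun v' _ => h0 _)
          (Finset.mem_univ _)
      have := hu'.1 a
      rw [← hmargU (u a)]
      linarith
    -- ∏ pU(u a) ≤ exp(-(l(Hu-δ))) for u ∈ T
    have fbound : ∀ u ∈ T, ∏ a, pU (u a) ≤ Real.exp (-(l * (Hu - δ))) := by
      intro u hu
      exact prod_le_exp _ (hpUpos u hu) (Finset.mem_filter.1 hu).2.2.2.1
    -- card bound
    have flow : ∀ u ∈ T, Real.exp (-(l * (Huv + δ))) ≤ ∏ a, pUV (u a, v a) := by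
      intro u hu
      have hu' := (Finset.mem_filter.1 hu).2
      exact exp_le_prod _ hu'.1 hu'.2.1
    have fsum : ∑ u ∈ T, ∏ a, pUV (u a, v a) ≤ Real.exp (-(l * (Hv - δ))) := by
      calc ∑ u ∈ T, ∏ a, pUV (u a, v a)
          ≤ ∑ u : Fin l → U, ∏ a, pUV (u a, v a) :=
            Finset.sum_le_sum_of_subset_of_nonneg (Finset.subset_univ T)
              (fun u _ _ => Finset.prod_nonneg (fun a _ => h0 _))
        _ = ∏ a, ∑ b, pUV (b, v a) := sum_pi_prod (fun a b => pUV (b, v a))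
        _ = ∏ a, pV (v a) := Finset.prod_congr rfl (fun a _ => hmargV (v a))
        _ ≤ Real.exp (-(l * (Hv - δ))) := prod_le_exp _ hpVpos hvc
    have hcard : (T.card : ℝ) ≤ Real.exp (-(l * (Hv - δ))) / Real.exp (-(l * (Huv + δ))) := by
      rw [le_div_iff₀ (Real.exp_pos _)]
      calc (T.card : ℝ) * Real.exp (-(l * (Huv + δ)))
          = ∑ _u ∈ T, Real.exp (-(l * (Huv + δ))) := by
            rw [Finset.sum_const, nsmul_eq_mul]
        _ ≤ ∑ u ∈ T, ∏ a, pUV (u a, v a) := Finset.sum_le_sum flow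
        _ ≤ _ := fsum
    calc ∑ u ∈ T, ∏ a, pU (u a)
        ≤ ∑ _u ∈ T, Real.exp (-(l * (Hu - δ))) := Finset.sum_le_sum fbound
      _ = (T.card : ℝ) * Real.exp (-(l * (Hu - δ))) := by
          rw [Finset.sum_const, nsmul_eq_mul]
      _ ≤ (Real.exp (-(l * (Hv - δ))) / Real.exp (-(l * (Huv + δ))))
            * Real.exp (-(l * (Hu - δ))) := by
          apply mul_le_mul_of_nonneg_right hcard (le_of_lt (Real.exp_pos _))
      _ = Real.exp (-(l * (Hu + Hv - Huv - 3*δ))) := by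
          rw [div_mul_eq_mul_div, ← Real.exp_add, ← Real.exp_sub]
          congr 1
          ring

lemma sum_merge {A B : Type} [Fintype A] [Fintype B] {l : ℕ} (Φ : (Fin l → A × B) → ℝ) :
    ∑ s : Fin l → A × B, Φ s
      = ∑ u : Fin l → A, ∑ v : Fin l → B, Φ (fun a => (u a, v a)) := by
  rw [← Equiv.sum_comp (Equiv.arrowProdEquivProdArrow (Fin l) (fun _ => A) (fun _ => B)).symm Φ,
    Fintype.sum_prod_type]
  rfl

section Core
variable {K : ℕ} {𝓨 𝓥 : Fin K → Type} [∀ k, Fintype (𝓨 k)] [∀ k, Fintype (𝓥 k)]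
variable [∀ k, DecidableEq (𝓨 k)] [∀ k, DecidableEq (𝓥 k)]
variable (P : PMF (Bool × ∀ j, 𝓨 j)) (PU : PMF Bool) (W : Bool → PMF (∀ j, 𝓥 j)) (k : Fin K)

noncomputable def pXY : Bool × 𝓨 k → ℝ := fun z => ((P.map fun p => (p.1, p.2 k)) z).toReal
noncomputable def pYm : 𝓨 k → ℝ := fun y => ((P.map fun p => p.2 k) y).toReal
noncomputable def JU : PMF (Bool × ∀ j, 𝓥 j) := PU.bind fun u => (W u).map fun v => (u, v)
noncomputable def pUV : Bool × 𝓥 k → ℝ :=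
  fun z => (((JU PU W).map fun p => (p.1, p.2 k)) z).toReal
noncomputable def pUm : Bool → ℝ := fun u => (((JU PU W).map fun p => p.1) u).toReal
noncomputable def pVm : 𝓥 k → ℝ := fun v => (((JU PU W).map fun p => p.2 k) v).toReal
noncomputable def HXY : ℝ := pmfEntropy (P.map fun p => (p.1, p.2 k))
noncomputable def HY : ℝ := pmfEntropy (P.map fun p => p.2 k)
noncomputable def HUV : ℝ := pmfEntropy ((JU PU W).map fun p => (p.1, p.2 k))
noncomputable def HU : ℝ := pmfEntropy ((JU PU W).map fun p => p.1)
noncomputable def HV : ℝ := pmfEntropy ((JU PU W).map fun p => p.2 k)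
noncomputable def hxy : (Bool × ∀ j, 𝓨 j) → ℝ := fun a => -Real.log (pXY P k (a.1, a.2 k))
noncomputable def hyf : (Bool × ∀ j, 𝓨 j) → ℝ := fun a => -Real.log (pYm P k (a.2 k))
noncomputable def huv : (Bool × ∀ j, 𝓥 j) → ℝ := fun b => -Real.log (pUV PU W k (b.1, b.2 k))
noncomputable def huf : (Bool × ∀ j, 𝓥 j) → ℝ := fun b => -Real.log (pUm PU W b.1)
noncomputable def hvf : (Bool × ∀ j, 𝓥 j) → ℝ := fun b => -Real.log (pVm PU W k (b.2 k))
noncomputable def Vxy : ℝ := ∑ a, (P a).toReal * (hxy P k a - HXY P k)^2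
noncomputable def Vy : ℝ := ∑ a, (P a).toReal * (hyf P k a - HY P k)^2
noncomputable def Vuv : ℝ := ∑ b, ((JU PU W) b).toReal * (huv PU W k b - HUV PU W k)^2
noncomputable def Vu : ℝ := ∑ b, ((JU PU W) b).toReal * (huf PU W b - HU PU W)^2
noncomputable def Vv : ℝ := ∑ b, ((JU PU W) b).toReal * (hvf PU W k b - HV PU W k)^2

lemma mean_hxy : ∑ a, (P a).toReal * hxy P k a = HXY P k := entropy_eq_mean P _
lemma mean_hyf : ∑ a, (P a).toReal * hyf P k a = HY P k := entropy_eq_mean P _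
lemma mean_huv : ∑ b, ((JU PU W) b).toReal * huv PU W k b = HUV PU W k :=
  entropy_eq_mean (JU PU W) _
lemma mean_huf : ∑ b, ((JU PU W) b).toReal * huf PU W b = HU PU W :=
  entropy_eq_mean (JU PU W) _
lemma mean_hvf : ∑ b, ((JU PU W) b).toReal * hvf PU W k b = HV PU W k :=
  entropy_eq_mean (JU PU W) _

lemma margXY (y : 𝓨 k) : ∑ x, pXY P k (x, y) = pYm P k y := fst_marg P _ _ y
lemma margUV_U (u : Bool) : ∑ v', pUV PU W k (u, v') = pUm PU W u := snd_marg (JU PU W) _ _ u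
lemma margUV_V (v' : 𝓥 k) : ∑ u, pUV PU W k (u, v') = pVm PU W k v' := fst_marg (JU PU W) _ _ v'

lemma pJ_eq (u : Bool) (vv : ∀ j, 𝓥 j) :
    ((JU PU W) (u, vv)).toReal = (PU u).toReal * (W u vv).toReal :=
  pmf_bind_map_toReal PU W u vv

lemma pUm_eq (u : Bool) : pUm PU W u = (PU u).toReal := by
  unfold pUm
  rw [pmf_map_toReal]
  rw [Fintype.sum_prod_type]
  rw [Finset.sum_eq_single u]
  · have : ∀ vv : (∀ j, 𝓥 j), (if u = u then ((JU PU W) (u, vv)).toReal else 0)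
        = (PU u).toReal * (W u vv).toReal := by
      intro vv; rw [if_pos rfl, pJ_eq]
    rw [Finset.sum_congr rfl (fun vv _ => this vv), ← Finset.mul_sum, pmf_sum_one, mul_one]
  · intro u' _ hu'
    apply Finset.sum_eq_zero
    intro vv _
    rw [if_neg hu']
  · intro h; exact absurd (Finset.mem_univ u) h

lemma pXY_pos_of (a : Bool × ∀ j, 𝓨 j) (h : 0 < (P a).toReal) : 0 < pXY P k (a.1, a.2 k) :=
  lt_of_lt_of_le h (marg_le P _ a)

lemma pA_le_pXY (a : Bool × ∀ j, 𝓨 j) : (P a).toReal ≤ pXY P k (a.1, a.2 k) :=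
  marg_le P (fun p => (p.1, p.2 k)) a

lemma pJ_le_pUV (b : Bool × ∀ j, 𝓥 j) : ((JU PU W) b).toReal ≤ pUV PU W k (b.1, b.2 k) :=
  marg_le (JU PU W) (fun p => (p.1, p.2 k)) b

-- conditional entropy nonneg
lemma HY_le_HXY : HY P k ≤ HXY P k := by
  rw [← mean_hxy P k, ← mean_hyf P k]
  apply Finset.sum_le_sum
  intro a _
  rcases eq_or_lt_of_le (ENNReal.toReal_nonneg : (0:ℝ) ≤ (P a).toReal) with h | h
  · rw [← h]; simp
  · apply mul_le_mul_of_nonneg_left _ (le_of_lt h)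
    have h1 : 0 < pXY P k (a.1, a.2 k) := pXY_pos_of P k a h
    have h2 : pXY P k (a.1, a.2 k) ≤ pYm P k (a.2 k) := by
      rw [← margXY P k (a.2 k)]
      exact Finset.single_le_sum (f := fun x => pXY P k (x, a.2 k))
        (fun x _ => ENNReal.toReal_nonneg) (Finset.mem_univ a.1)
    unfold hxy hyf
    simp only [neg_le_neg_iff]
    exact Real.log_le_log h1 h2


variable (n l : ℕ) (δ : ℝ)

@[reducible] def TS (x : Fin n → Bool) (y : Fin n → 𝓨 k) : Prop :=
  (∀ i, 0 < pXY P k (x i, y i)) ∧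
  (∑ i, -Real.log (pXY P k (x i, y i))) ≤ n * (HXY P k + δ) ∧
  n * (HY P k - δ) ≤ ∑ i, -Real.log (pYm P k (y i))

@[reducible] def TC (u : Fin l → Bool) (v : Fin l → 𝓥 k) : Prop :=
  (∀ a, 0 < pUV PU W k (u a, v a)) ∧
  (∑ a, -Real.log (pUV PU W k (u a, v a))) ≤ l * (HUV PU W k + δ) ∧
  l * (HU PU W - δ) ≤ (∑ a, -Real.log (pUm PU W (u a))) ∧
  l * (HV PU W k - δ) ≤ (∑ a, -Real.log (pVm PU W k (v a)))

open Classical in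
noncomputable def gdec (c : (Fin n → Bool) → Fin l → Bool) :
    (Fin l → 𝓥 k) × (Fin n → 𝓨 k) → Fin n → Bool :=
  fun vy => if h : ∃! x : Fin n → Bool, TS P k n δ x vy.2 ∧ TC PU W k l δ (c x) vy.1
    then h.choose else fun _ => false

lemma gdec_eq (c : (Fin n → Bool) → Fin l → Bool) (v : Fin l → 𝓥 k)
    (y : Fin n → 𝓨 k) (x₀ : Fin n → Bool) (h1 : TS P k n δ x₀ y)
    (h2 : TC PU W k l δ (c x₀) v)
    (h3 : ∀ x', x' ≠ x₀ → ¬(TS P k n δ x' y ∧ TC PU W k l δ (c x') v)) :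
    gdec P PU W k n l δ c (v, y) = x₀ := by
  have hex : ∃! x : Fin n → Bool, TS P k n δ x y ∧ TC PU W k l δ (c x) v := by
    refine ⟨x₀, ⟨h1, h2⟩, ?_⟩
    intro x' hx'
    by_contra hne
    exact h3 x' hne hx'
  unfold gdec
  rw [dif_pos hex]
  by_contra hne
  exact h3 _ hne hex.choose_spec.1

open Classical in
lemma Abound (hn : 0 < n) (hδ : 0 < δ) :
    ∑ ω : Fin n → Bool × (∀ j, 𝓨 j), (∏ i, (P (ω i)).toReal) *
      (if ¬ TS P k n δ (fun i => (ω i).1) (fun i => (ω i).2 k) then (1:ℝ) else 0)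
    ≤ (Vxy P k + Vy P k) / (n * δ^2) := by
  have hq0 : ∀ a, (0:ℝ) ≤ (P a).toReal := fun a => ENNReal.toReal_nonneg
  have hprodnn : ∀ ω : Fin n → Bool × (∀ j, 𝓨 j), (0:ℝ) ≤ ∏ i, (P (ω i)).toReal :=
    fun ω => Finset.prod_nonneg (fun i _ => hq0 _)
  have hnd : (0:ℝ) < (n:ℝ) * δ := by positivity
  -- pointwise split
  have point : ∀ ω : Fin n → Bool × (∀ j, 𝓨 j),
      (if ¬ TS P k n δ (fun i => (ω i).1) (fun i => (ω i).2 k) then (1:ℝ) else 0)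
      ≤ (if ¬ (∀ i, 0 < pXY P k ((ω i).1, (ω i).2 k)) then (1:ℝ) else 0)
        + (if (n:ℝ) * δ ≤ |∑ i, hxy P k (ω i) - n * HXY P k| then (1:ℝ) else 0)
        + (if (n:ℝ) * δ ≤ |∑ i, hyf P k (ω i) - n * HY P k| then (1:ℝ) else 0) := by
    intro ω
    by_cases hT : TS P k n δ (fun i => (ω i).1) (fun i => (ω i).2 k)
    · rw [if_neg (not_not_intro hT)]
      positivity
    · rw [if_pos hT]
      unfold TS at hT
      push_neg at hT
      by_cases hpos : ∀ i, 0 < pXY P k ((ω i).1, (ω i).2 k)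
      · by_cases hc2 : (∑ i, -Real.log (pXY P k ((ω i).1, (ω i).2 k))) ≤ (n:ℝ) * (HXY P k + δ)
        · have h3 := hT hpos hc2
          have hdev : (n:ℝ) * δ ≤ |∑ i, hyf P k (ω i) - n * HY P k| := by
            have hx : (∑ i, hyf P k (ω i)) = ∑ i, -Real.log (pYm P k ((ω i).2 k)) := rfl
            rw [hx]
            have h4 := neg_le_abs (∑ i, -Real.log (pYm P k ((ω i).2 k)) - n * HY P k)
            nlinarith
          rw [if_pos hdev]
          have t1 : (0:ℝ) ≤ (if ¬ (∀ i, 0 < pXY P k ((ω i).1, (ω i).2 k)) then (1:ℝ) else 0) := by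
            positivity
          have t2 : (0:ℝ) ≤ (if (n:ℝ) * δ ≤ |∑ i, hxy P k (ω i) - n * HXY P k| then (1:ℝ) else 0) := by
            positivity
          linarith
        · have hdev : (n:ℝ) * δ ≤ |∑ i, hxy P k (ω i) - n * HXY P k| := by
            have hx : (∑ i, hxy P k (ω i)) = ∑ i, -Real.log (pXY P k ((ω i).1, (ω i).2 k)) := rfl
            rw [hx]
            push_neg at hc2
            have h4 := le_abs_self (∑ i, -Real.log (pXY P k ((ω i).1, (ω i).2 k)) - n * HXY P k)
            nlinarith
          rw [if_pos hdev]
          have t1 : (0:ℝ) ≤ (if ¬ (∀ i, 0 < pXY P k ((ω i).1, (ω i).2 k)) then (1:ℝ) else 0) := by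
            positivity
          have t3 : (0:ℝ) ≤ (if (n:ℝ) * δ ≤ |∑ i, hyf P k (ω i) - n * HY P k| then (1:ℝ) else 0) := by
            positivity
          linarith
      · rw [if_pos hpos]
        have : (0:ℝ) ≤ (if (n:ℝ) * δ ≤ |∑ i, hxy P k (ω i) - n * HXY P k| then (1:ℝ) else 0)
            + (if (n:ℝ) * δ ≤ |∑ i, hyf P k (ω i) - n * HY P k| then (1:ℝ) else 0) := by
          positivity
        linarith
  have hzero : ∑ ω : Fin n → Bool × (∀ j, 𝓨 j), (∏ i, (P (ω i)).toReal) *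
      (if ¬ (∀ i, 0 < pXY P k ((ω i).1, (ω i).2 k)) then (1:ℝ) else 0) = 0 := by
    apply Finset.sum_eq_zero
    intro ω _
    by_cases hpos : ∀ i, 0 < pXY P k ((ω i).1, (ω i).2 k)
    · rw [if_neg (not_not_intro hpos), mul_zero]
    · push_neg at hpos
      obtain ⟨i, hi⟩ := hpos
      have hle : pXY P k ((ω i).1, (ω i).2 k) ≤ 0 := hi
      have h0 : (P (ω i)).toReal = 0 :=
        le_antisymm (le_trans (pA_le_pXY P k (ω i)) hle) ENNReal.toReal_nonneg
      rw [Finset.prod_eq_zero (Finset.mem_univ i) h0, zero_mul]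
  have c1 := chebyshev (fun a => (P a).toReal) hq0 (pmf_sum_one P) (hxy P k) hn hδ
  rw [mean_hxy P k] at c1
  have c2 := chebyshev (fun a => (P a).toReal) hq0 (pmf_sum_one P) (hyf P k) hn hδ
  rw [mean_hyf P k] at c2
  calc ∑ ω : Fin n → Bool × (∀ j, 𝓨 j), (∏ i, (P (ω i)).toReal) *
      (if ¬ TS P k n δ (fun i => (ω i).1) (fun i => (ω i).2 k) then (1:ℝ) else 0)
      ≤ ∑ ω : Fin n → Bool × (∀ j, 𝓨 j), ((∏ i, (P (ω i)).toReal) *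
        (if ¬ (∀ i, 0 < pXY P k ((ω i).1, (ω i).2 k)) then (1:ℝ) else 0)
        + ((∏ i, (P (ω i)).toReal) *
          (if (n:ℝ) * δ ≤ |∑ i, hxy P k (ω i) - n * HXY P k| then (1:ℝ) else 0)
        + (∏ i, (P (ω i)).toReal) *
          (if (n:ℝ) * δ ≤ |∑ i, hyf P k (ω i) - n * HY P k| then (1:ℝ) else 0))) := by
        apply Finset.sum_le_sum
        intro ω _
        have := mul_le_mul_of_nonneg_left (point ω) (hprodnn ω)
        calc (∏ i, (P (ω i)).toReal) *
            (if ¬ TS P k n δ (fun i => (ω i).1) (fun i => (ω i).2 k) then (1:ℝ) else 0)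
            ≤ _ := this
          _ = _ := by ring
    _ = 0 + ((∑ ω : Fin n → Bool × (∀ j, 𝓨 j), (∏ i, (P (ω i)).toReal) *
          (if (n:ℝ) * δ ≤ |∑ i, hxy P k (ω i) - n * HXY P k| then (1:ℝ) else 0))
        + ∑ ω : Fin n → Bool × (∀ j, 𝓨 j), (∏ i, (P (ω i)).toReal) *
          (if (n:ℝ) * δ ≤ |∑ i, hyf P k (ω i) - n * HY P k| then (1:ℝ) else 0)) := by
        rw [Finset.sum_add_distrib, Finset.sum_add_distrib, hzero]
    _ ≤ 0 + (Vxy P k / (n * δ^2) + Vy P k / (n * δ^2)) := by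
        apply add_le_add le_rfl
        exact add_le_add c1 c2
    _ = (Vxy P k + Vy P k) / (n * δ^2) := by
        rw [zero_add, ← add_div]

open Classical in
lemma Bbound (hl : 0 < l) (hδ : 0 < δ) :
    ∑ s : Fin l → Bool × (∀ j, 𝓥 j), (∏ a, ((JU PU W) (s a)).toReal) *
      (if ¬ TC PU W k l δ (fun a => (s a).1) (fun a => (s a).2 k) then (1:ℝ) else 0)
    ≤ (Vuv PU W k + Vu PU W + Vv PU W k) / (l * δ^2) := by
  have hq0 : ∀ b, (0:ℝ) ≤ ((JU PU W) b).toReal := fun b => ENNReal.toReal_nonneg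
  have hprodnn : ∀ s : Fin l → Bool × (∀ j, 𝓥 j), (0:ℝ) ≤ ∏ a, ((JU PU W) (s a)).toReal :=
    fun s => Finset.prod_nonneg (fun a _ => hq0 _)
  have point : ∀ s : Fin l → Bool × (∀ j, 𝓥 j),
      (if ¬ TC PU W k l δ (fun a => (s a).1) (fun a => (s a).2 k) then (1:ℝ) else 0)
      ≤ (if ¬ (∀ a, 0 < pUV PU W k ((s a).1, (s a).2 k)) then (1:ℝ) else 0)
        + ((if (l:ℝ) * δ ≤ |∑ a, huv PU W k (s a) - l * HUV PU W k| then (1:ℝ) else 0)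
        + ((if (l:ℝ) * δ ≤ |∑ a, huf PU W (s a) - l * HU PU W| then (1:ℝ) else 0)
        + (if (l:ℝ) * δ ≤ |∑ a, hvf PU W k (s a) - l * HV PU W k| then (1:ℝ) else 0))) := by
    intro s
    by_cases hT : TC PU W k l δ (fun a => (s a).1) (fun a => (s a).2 k)
    · rw [if_neg (not_not_intro hT)]
      positivity
    · rw [if_pos hT]
      unfold TC at hT
      push_neg at hT
      by_cases hpos : ∀ a, 0 < pUV PU W k ((s a).1, (s a).2 k)
      · have t0 : (0:ℝ) ≤ (if ¬ (∀ a, 0 < pUV PU W k ((s a).1, (s a).2 k)) then (1:ℝ) else 0) := by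
          positivity
        by_cases hc2 : (∑ a, -Real.log (pUV PU W k ((s a).1, (s a).2 k))) ≤ (l:ℝ) * (HUV PU W k + δ)
        · have hT2 := hT hpos hc2
          by_cases hc3 : (l:ℝ) * (HU PU W - δ) ≤ ∑ a, -Real.log (pUm PU W ((s a).1))
          · have h4 := hT2 hc3
            have hdev : (l:ℝ) * δ ≤ |∑ a, hvf PU W k (s a) - l * HV PU W k| := by
              have hx : (∑ a, hvf PU W k (s a)) = ∑ a, -Real.log (pVm PU W k ((s a).2 k)) := rfl
              rw [hx]
              have h5 := neg_le_abs (∑ a, -Real.log (pVm PU W k ((s a).2 k)) - l * HV PU W k)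
              nlinarith
            rw [if_pos hdev]
            have t2 : (0:ℝ) ≤ (if (l:ℝ) * δ ≤ |∑ a, huv PU W k (s a) - l * HUV PU W k| then (1:ℝ) else 0) := by
              positivity
            have t3 : (0:ℝ) ≤ (if (l:ℝ) * δ ≤ |∑ a, huf PU W (s a) - l * HU PU W| then (1:ℝ) else 0) := by
              positivity
            linarith
          · have hdev : (l:ℝ) * δ ≤ |∑ a, huf PU W (s a) - l * HU PU W| := by
              have hx : (∑ a, huf PU W (s a)) = ∑ a, -Real.log (pUm PU W ((s a).1)) := rfl
              rw [hx]
              push_neg at hc3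
              have h5 := neg_le_abs (∑ a, -Real.log (pUm PU W ((s a).1)) - l * HU PU W)
              nlinarith
            rw [if_pos hdev]
            have t2 : (0:ℝ) ≤ (if (l:ℝ) * δ ≤ |∑ a, huv PU W k (s a) - l * HUV PU W k| then (1:ℝ) else 0) := by
              positivity
            have t4 : (0:ℝ) ≤ (if (l:ℝ) * δ ≤ |∑ a, hvf PU W k (s a) - l * HV PU W k| then (1:ℝ) else 0) := by
              positivity
            linarith
        · have hdev : (l:ℝ) * δ ≤ |∑ a, huv PU W k (s a) - l * HUV PU W k| := by
            have hx : (∑ a, huv PU W k (s a)) = ∑ a, -Real.log (pUV PU W k ((s a).1, (s a).2 k)) := rfl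
            rw [hx]
            push_neg at hc2
            have h5 := le_abs_self (∑ a, -Real.log (pUV PU W k ((s a).1, (s a).2 k)) - l * HUV PU W k)
            nlinarith
          rw [if_pos hdev]
          have t3 : (0:ℝ) ≤ (if (l:ℝ) * δ ≤ |∑ a, huf PU W (s a) - l * HU PU W| then (1:ℝ) else 0) := by
            positivity
          have t4 : (0:ℝ) ≤ (if (l:ℝ) * δ ≤ |∑ a, hvf PU W k (s a) - l * HV PU W k| then (1:ℝ) else 0) := by
            positivity
          linarith
      · rw [if_pos hpos]
        have : (0:ℝ) ≤ (if (l:ℝ) * δ ≤ |∑ a, huv PU W k (s a) - l * HUV PU W k| then (1:ℝ) else 0)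
            + ((if (l:ℝ) * δ ≤ |∑ a, huf PU W (s a) - l * HU PU W| then (1:ℝ) else 0)
            + (if (l:ℝ) * δ ≤ |∑ a, hvf PU W k (s a) - l * HV PU W k| then (1:ℝ) else 0)) := by
          positivity
        linarith
  have hzero : ∑ s : Fin l → Bool × (∀ j, 𝓥 j), (∏ a, ((JU PU W) (s a)).toReal) *
      (if ¬ (∀ a, 0 < pUV PU W k ((s a).1, (s a).2 k)) then (1:ℝ) else 0) = 0 := by
    apply Finset.sum_eq_zero
    intro s _
    by_cases hpos : ∀ a, 0 < pUV PU W k ((s a).1, (s a).2 k)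
    · rw [if_neg (not_not_intro hpos), mul_zero]
    · push_neg at hpos
      obtain ⟨a, ha⟩ := hpos
      have h0 : ((JU PU W) (s a)).toReal = 0 :=
        le_antisymm (le_trans (pJ_le_pUV PU W k (s a)) ha) ENNReal.toReal_nonneg
      rw [Finset.prod_eq_zero (Finset.mem_univ a) h0, zero_mul]
  have c1 := chebyshev (fun b => ((JU PU W) b).toReal) hq0 (pmf_sum_one (JU PU W))
    (huv PU W k) hl hδ
  rw [mean_huv PU W k] at c1
  have c2 := chebyshev (fun b => ((JU PU W) b).toReal) hq0 (pmf_sum_one (JU PU W))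
    (huf PU W) hl hδ
  rw [mean_huf PU W] at c2
  have c3 := chebyshev (fun b => ((JU PU W) b).toReal) hq0 (pmf_sum_one (JU PU W))
    (hvf PU W k) hl hδ
  rw [mean_hvf PU W k] at c3
  calc ∑ s : Fin l → Bool × (∀ j, 𝓥 j), (∏ a, ((JU PU W) (s a)).toReal) *
      (if ¬ TC PU W k l δ (fun a => (s a).1) (fun a => (s a).2 k) then (1:ℝ) else 0)
      ≤ ∑ s : Fin l → Bool × (∀ j, 𝓥 j), ((∏ a, ((JU PU W) (s a)).toReal) *
        (if ¬ (∀ a, 0 < pUV PU W k ((s a).1, (s a).2 k)) then (1:ℝ) else 0)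
        + ((∏ a, ((JU PU W) (s a)).toReal) *
          (if (l:ℝ) * δ ≤ |∑ a, huv PU W k (s a) - l * HUV PU W k| then (1:ℝ) else 0)
        + ((∏ a, ((JU PU W) (s a)).toReal) *
          (if (l:ℝ) * δ ≤ |∑ a, huf PU W (s a) - l * HU PU W| then (1:ℝ) else 0)
        + (∏ a, ((JU PU W) (s a)).toReal) *
          (if (l:ℝ) * δ ≤ |∑ a, hvf PU W k (s a) - l * HV PU W k| then (1:ℝ) else 0)))) := by
        apply Finset.sum_le_sum
        intro s _
        have := mul_le_mul_of_nonneg_left (point s) (hprodnn s)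
        calc (∏ a, ((JU PU W) (s a)).toReal) *
            (if ¬ TC PU W k l δ (fun a => (s a).1) (fun a => (s a).2 k) then (1:ℝ) else 0)
            ≤ _ := this
          _ = _ := by ring
    _ = 0 + ((∑ s : Fin l → Bool × (∀ j, 𝓥 j), (∏ a, ((JU PU W) (s a)).toReal) *
          (if (l:ℝ) * δ ≤ |∑ a, huv PU W k (s a) - l * HUV PU W k| then (1:ℝ) else 0))
        + ((∑ s : Fin l → Bool × (∀ j, 𝓥 j), (∏ a, ((JU PU W) (s a)).toReal) *
          (if (l:ℝ) * δ ≤ |∑ a, huf PU W (s a) - l * HU PU W| then (1:ℝ) else 0))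
        + ∑ s : Fin l → Bool × (∀ j, 𝓥 j), (∏ a, ((JU PU W) (s a)).toReal) *
          (if (l:ℝ) * δ ≤ |∑ a, hvf PU W k (s a) - l * HV PU W k| then (1:ℝ) else 0))) := by
        rw [Finset.sum_add_distrib, Finset.sum_add_distrib, Finset.sum_add_distrib, hzero]
    _ ≤ 0 + (Vuv PU W k / (l * δ^2) + (Vu PU W / (l * δ^2) + Vv PU W k / (l * δ^2))) := by
        apply add_le_add le_rfl
        exact add_le_add c1 (add_le_add c2 c3)
    _ = (Vuv PU W k + Vu PU W + Vv PU W k) / (l * δ^2) := by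
        rw [zero_add, ← add_div, ← add_div]
        ring_nf

-- indicator helpers
open Classical in
noncomputable def i1f : (Fin n → Bool × (∀ j, 𝓨 j)) → ℝ :=
  fun ω => if ¬ TS P k n δ (fun i => (ω i).1) (fun i => (ω i).2 k) then 1 else 0
open Classical in
noncomputable def i2f : (Fin l → Bool) → (Fin l → (∀ j, 𝓥 j)) → ℝ :=
  fun u v => if ¬ TC PU W k l δ u (fun a => v a k) then 1 else 0
open Classical in
noncomputable def i3f : ((Fin n → Bool) → Fin l → Bool) → (Fin n → Bool × (∀ j, 𝓨 j))
    → (Fin l → (∀ j, 𝓥 j)) → ℝ :=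
  fun c ω v => ∑ x' ∈ Finset.univ.erase (fun i => (ω i).1),
    (if TS P k n δ x' (fun i => (ω i).2 k) then (1:ℝ) else 0) *
    (if TC PU W k l δ (c x') (fun a => v a k) then (1:ℝ) else 0)

lemma i1f_nonneg (ω) : 0 ≤ i1f P k n δ ω := by unfold i1f; positivity
lemma i2f_nonneg (u v) : 0 ≤ i2f PU W k l δ u v := by unfold i2f; positivity
lemma i3f_nonneg (c ω v) : 0 ≤ i3f P PU W k n l δ c ω v := by
  unfold i3f
  apply Finset.sum_nonneg
  intro x' _
  positivity

open Classical in
lemma point_bound (c : (Fin n → Bool) → Fin l → Bool) (ω : Fin n → Bool × (∀ j, 𝓨 j))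
    (v : Fin l → (∀ j, 𝓥 j)) :
    (if (fun i => (ω i).1) ≠ gdec P PU W k n l δ c ((fun a => v a k), fun i => (ω i).2 k)
      then (∏ i, (P (ω i)).toReal) * ∏ a, (W (c (fun i => (ω i).1) a) (v a)).toReal else 0)
    ≤ (∏ i, (P (ω i)).toReal) * ((∏ a, (W (c (fun i => (ω i).1) a) (v a)).toReal)
        * (i1f P k n δ ω + i2f PU W k l δ (c (fun i => (ω i).1)) v
            + i3f P PU W k n l δ c ω v)) := by
  have hwP : (0:ℝ) ≤ ∏ i, (P (ω i)).toReal :=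
    Finset.prod_nonneg (fun i _ => ENNReal.toReal_nonneg)
  have hwW : (0:ℝ) ≤ ∏ a, (W (c (fun i => (ω i).1) a) (v a)).toReal :=
    Finset.prod_nonneg (fun a _ => ENNReal.toReal_nonneg)
  split
  · rename_i herr
    -- the decoder failed, so one of the three events happened
    have hone : 1 ≤ i1f P k n δ ω + i2f PU W k l δ (c (fun i => (ω i).1)) v
        + i3f P PU W k n l δ c ω v := by
      by_cases h1 : TS P k n δ (fun i => (ω i).1) (fun i => (ω i).2 k)
      · by_cases h2 : TC PU W k l δ (c (fun i => (ω i).1)) (fun a => v a k)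
        · -- some other codeword must be jointly typical
          have h3 : ¬ (∀ x', x' ≠ (fun i => (ω i).1) →
              ¬(TS P k n δ x' (fun i => (ω i).2 k) ∧
                TC PU W k l δ (c x') (fun a => v a k))) := by
            intro hall
            exact herr (Eq.symm (gdec_eq P PU W k n l δ c (fun a => v a k)
              (fun i => (ω i).2 k) (fun i => (ω i).1) h1 h2 hall))
          push_neg at h3
          obtain ⟨x', hx'ne, hx'T⟩ := h3
          have hmem : x' ∈ Finset.univ.erase (fun i => (ω i).1) :=
            Finset.mem_erase.2 ⟨hx'ne, Finset.mem_univ x'⟩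
          have hterm : (1:ℝ) ≤ (if TS P k n δ x' (fun i => (ω i).2 k) then (1:ℝ) else 0) *
              (if TC PU W k l δ (c x') (fun a => v a k) then (1:ℝ) else 0) := by
            rw [if_pos hx'T.1, if_pos hx'T.2, one_mul]
          have h4 : (1:ℝ) ≤ i3f P PU W k n l δ c ω v := by
            refine le_trans hterm ?_
            unfold i3f
            refine Finset.single_le_sum (f := fun x'' =>
              (if TS P k n δ x'' (fun i => (ω i).2 k) then (1:ℝ) else 0) *
              (if TC PU W k l δ (c x'') (fun a => v a k) then (1:ℝ) else 0)) ?_ hmem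
            intro x'' _
            positivity
          have := i1f_nonneg P k n δ ω
          have := i2f_nonneg PU W k l δ (c (fun i => (ω i).1)) v
          linarith
        · have h4 : (1:ℝ) ≤ i2f PU W k l δ (c (fun i => (ω i).1)) v := by
            unfold i2f
            rw [if_pos h2]
          have := i1f_nonneg P k n δ ω
          have := i3f_nonneg P PU W k n l δ c ω v
          linarith
      · have h4 : (1:ℝ) ≤ i1f P k n δ ω := by
          unfold i1f
          rw [if_pos h1]
        have := i2f_nonneg PU W k l δ (c (fun i => (ω i).1)) v
        have := i3f_nonneg P PU W k n l δ c ω v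
        linarith
    calc (∏ i, (P (ω i)).toReal) * ∏ a, (W (c (fun i => (ω i).1) a) (v a)).toReal
        = (∏ i, (P (ω i)).toReal) * ((∏ a, (W (c (fun i => (ω i).1) a) (v a)).toReal) * 1) := by
          ring
      _ ≤ _ := by
          apply mul_le_mul_of_nonneg_left _ hwP
          apply mul_le_mul_of_nonneg_left hone hwW
  · have h1 := i1f_nonneg P k n δ ω
    have h2 := i2f_nonneg PU W k l δ (c (fun i => (ω i).1)) v
    have h3 := i3f_nonneg P PU W k n l δ c ω v
    positivity

-- normalization facts
lemma hpuseq1 : ∑ u : Fin l → Bool, ∏ a, (PU (u a)).toReal = 1 := by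
  rw [sum_pi_prod (fun (_ : Fin l) (b : Bool) => (PU b).toReal)]
  exact Finset.prod_eq_one (fun a _ => pmf_sum_one PU)

lemma hPrc1 : ∑ c : (Fin n → Bool) → Fin l → Bool, ∏ x, ∏ a, (PU (c x a)).toReal = 1 := by
  rw [sum_pi_prod (fun (_ : Fin n → Bool) (u : Fin l → Bool) => ∏ a, (PU (u a)).toReal)]
  exact Finset.prod_eq_one (fun x _ => hpuseq1 PU l)

lemma hwP1 : ∑ ω : Fin n → Bool × (∀ j, 𝓨 j), ∏ i, (P (ω i)).toReal = 1 := by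
  rw [sum_pi_prod (fun (_ : Fin n) (a : Bool × (∀ j, 𝓨 j)) => (P a).toReal)]
  exact Finset.prod_eq_one (fun i _ => pmf_sum_one P)

lemma hWsum (u : Fin l → Bool) :
    ∑ v : Fin l → (∀ j, 𝓥 j), ∏ a, (W (u a) (v a)).toReal = 1 := by
  rw [sum_pi_prod (fun (a : Fin l) (vv : ∀ j, 𝓥 j) => (W (u a) vv).toReal)]
  exact Finset.prod_eq_one (fun a _ => pmf_sum_one (W (u a)))

lemma coreA (hn : 0 < n) (hδ : 0 < δ) :
    ∑ c : (Fin n → Bool) → Fin l → Bool, ∑ ω : Fin n → Bool × (∀ j, 𝓨 j),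
      ∑ v : Fin l → (∀ j, 𝓥 j),
      (∏ x, ∏ a, (PU (c x a)).toReal) * ((∏ i, (P (ω i)).toReal) *
        ((∏ a, (W (c (fun i => (ω i).1) a) (v a)).toReal) * i1f P k n δ ω))
    ≤ (Vxy P k + Vy P k) / (n * δ^2) := by
  have step1 : ∀ (c : (Fin n → Bool) → Fin l → Bool) (ω : Fin n → Bool × (∀ j, 𝓨 j)),
      ∑ v : Fin l → (∀ j, 𝓥 j),
        (∏ x, ∏ a, (PU (c x a)).toReal) * ((∏ i, (P (ω i)).toReal) *
          ((∏ a, (W (c (fun i => (ω i).1) a) (v a)).toReal) * i1f P k n δ ω))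
        = (∏ x, ∏ a, (PU (c x a)).toReal) * ((∏ i, (P (ω i)).toReal) * i1f P k n δ ω) := by
    intro c ω
    calc ∑ v : Fin l → (∀ j, 𝓥 j),
        (∏ x, ∏ a, (PU (c x a)).toReal) * ((∏ i, (P (ω i)).toReal) *
          ((∏ a, (W (c (fun i => (ω i).1) a) (v a)).toReal) * i1f P k n δ ω))
        = ((∏ x, ∏ a, (PU (c x a)).toReal) * ((∏ i, (P (ω i)).toReal) * i1f P k n δ ω))
            * ∑ v : Fin l → (∀ j, 𝓥 j), ∏ a, (W (c (fun i => (ω i).1) a) (v a)).toReal := by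
          rw [Finset.mul_sum]
          exact Finset.sum_congr rfl (fun v _ => by ring)
      _ = _ := by rw [hWsum, mul_one]
  calc ∑ c : (Fin n → Bool) → Fin l → Bool, ∑ ω : Fin n → Bool × (∀ j, 𝓨 j),
      ∑ v : Fin l → (∀ j, 𝓥 j),
      (∏ x, ∏ a, (PU (c x a)).toReal) * ((∏ i, (P (ω i)).toReal) *
        ((∏ a, (W (c (fun i => (ω i).1) a) (v a)).toReal) * i1f P k n δ ω))
      = ∑ c : (Fin n → Bool) → Fin l → Bool, ∑ ω : Fin n → Bool × (∀ j, 𝓨 j),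
          (∏ x, ∏ a, (PU (c x a)).toReal) * ((∏ i, (P (ω i)).toReal) * i1f P k n δ ω) := by
        exact Finset.sum_congr rfl (fun c _ => Finset.sum_congr rfl (fun ω _ => step1 c ω))
    _ = ∑ ω : Fin n → Bool × (∀ j, 𝓨 j),
          (∑ c : (Fin n → Bool) → Fin l → Bool, ∏ x, ∏ a, (PU (c x a)).toReal)
            * ((∏ i, (P (ω i)).toReal) * i1f P k n δ ω) := by
        rw [Finset.sum_comm]
        exact Finset.sum_congr rfl (fun ω _ => (Finset.sum_mul _ _ _).symm)
    _ = ∑ ω : Fin n → Bool × (∀ j, 𝓨 j), (∏ i, (P (ω i)).toReal) * i1f P k n δ ω := by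
        rw [hPrc1]
        exact Finset.sum_congr rfl (fun ω _ => one_mul _)
    _ ≤ (Vxy P k + Vy P k) / (n * δ^2) := Abound P k n δ hn hδ

lemma coreB (hl : 0 < l) (hδ : 0 < δ) :
    ∑ c : (Fin n → Bool) → Fin l → Bool, ∑ ω : Fin n → Bool × (∀ j, 𝓨 j),
      ∑ v : Fin l → (∀ j, 𝓥 j),
      (∏ x, ∏ a, (PU (c x a)).toReal) * ((∏ i, (P (ω i)).toReal) *
        ((∏ a, (W (c (fun i => (ω i).1) a) (v a)).toReal)
          * i2f PU W k l δ (c (fun i => (ω i).1)) v))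
    ≤ (Vuv PU W k + Vu PU W + Vv PU W k) / (l * δ^2) := by
  set F : (Fin l → Bool) → ℝ := fun u => ∑ v : Fin l → (∀ j, 𝓥 j),
    (∏ a, (W (u a) (v a)).toReal) * i2f PU W k l δ u v with hF
  set D : ℝ := ∑ u : Fin l → Bool, (∏ a, (PU (u a)).toReal) * F u with hD
  have step1 : ∀ ω : Fin n → Bool × (∀ j, 𝓨 j),
      ∑ c : (Fin n → Bool) → Fin l → Bool, ∑ v : Fin l → (∀ j, 𝓥 j),
        (∏ x, ∏ a, (PU (c x a)).toReal) * ((∏ i, (P (ω i)).toReal) *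
          ((∏ a, (W (c (fun i => (ω i).1) a) (v a)).toReal)
            * i2f PU W k l δ (c (fun i => (ω i).1)) v))
      = (∏ i, (P (ω i)).toReal) * D := by
    intro ω
    have e1 : ∀ c : (Fin n → Bool) → Fin l → Bool,
        ∑ v : Fin l → (∀ j, 𝓥 j),
          (∏ x, ∏ a, (PU (c x a)).toReal) * ((∏ i, (P (ω i)).toReal) *
            ((∏ a, (W (c (fun i => (ω i).1) a) (v a)).toReal)
              * i2f PU W k l δ (c (fun i => (ω i).1)) v))
        = (∏ i, (P (ω i)).toReal) * ((∏ x, ∏ a, (PU (c x a)).toReal)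
            * F (c (fun i => (ω i).1))) := by
      intro c
      rw [hF, Finset.mul_sum, Finset.mul_sum]
      exact Finset.sum_congr rfl (fun v _ => by ring)
    rw [Finset.sum_congr rfl (fun c _ => e1 c), ← Finset.mul_sum]
    congr 1
    have := pexp_single (ι := Fin n → Bool)
      (q := fun u : Fin l → Bool => ∏ a, (PU (u a)).toReal)
      (hpuseq1 PU l) (fun i => (ω i).1) F
    rw [← hD] at this
    rw [← this]
  have step2 : D = ∑ s : Fin l → Bool × (∀ j, 𝓥 j), (∏ a, ((JU PU W) (s a)).toReal) *
      (if ¬ TC PU W k l δ (fun a => (s a).1) (fun a => (s a).2 k) then (1:ℝ) else 0) := by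
    rw [sum_merge (fun s : Fin l → Bool × (∀ j, 𝓥 j) =>
      (∏ a, ((JU PU W) (s a)).toReal) *
      (if ¬ TC PU W k l δ (fun a => (s a).1) (fun a => (s a).2 k) then (1:ℝ) else 0))]
    rw [hD]
    apply Finset.sum_congr rfl
    intro u _
    rw [hF, Finset.mul_sum]
    apply Finset.sum_congr rfl
    intro v _
    have e2 : ∏ a, ((JU PU W) (u a, v a)).toReal
        = (∏ a, (PU (u a)).toReal) * ∏ a, (W (u a) (v a)).toReal := by
      rw [← Finset.prod_mul_distrib]
      exact Finset.prod_congr rfl (fun a _ => pJ_eq PU W (u a) (v a))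
    calc (∏ a, (PU (u a)).toReal) * ((∏ a, (W (u a) (v a)).toReal) * i2f PU W k l δ u v)
        = ((∏ a, (PU (u a)).toReal) * ∏ a, (W (u a) (v a)).toReal) * i2f PU W k l δ u v := by
          ring
      _ = _ := by rw [← e2]; rfl
  calc ∑ c : (Fin n → Bool) → Fin l → Bool, ∑ ω : Fin n → Bool × (∀ j, 𝓨 j),
      ∑ v : Fin l → (∀ j, 𝓥 j),
      (∏ x, ∏ a, (PU (c x a)).toReal) * ((∏ i, (P (ω i)).toReal) *
        ((∏ a, (W (c (fun i => (ω i).1) a) (v a)).toReal)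
          * i2f PU W k l δ (c (fun i => (ω i).1)) v))
      = ∑ ω : Fin n → Bool × (∀ j, 𝓨 j), (∏ i, (P (ω i)).toReal) * D := by
        rw [Finset.sum_comm]
        exact Finset.sum_congr rfl (fun ω _ => step1 ω)
    _ = D := by rw [← Finset.sum_mul, hwP1, one_mul]
    _ ≤ _ := by rw [step2]; exact Bbound PU W k l δ hl hδ

open Classical in
lemma coreC (hδ : 0 < δ) :
    ∑ c : (Fin n → Bool) → Fin l → Bool, ∑ ω : Fin n → Bool × (∀ j, 𝓨 j),
      ∑ v : Fin l → (∀ j, 𝓥 j),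
      (∏ x, ∏ a, (PU (c x a)).toReal) * ((∏ i, (P (ω i)).toReal) *
        ((∏ a, (W (c (fun i => (ω i).1) a) (v a)).toReal) * i3f P PU W k n l δ c ω v))
    ≤ Real.exp ((n:ℝ) * (HXY P k - HY P k + 2*δ))
        * Real.exp (-((l:ℝ) * (HU PU W + HV PU W k - HUV PU W k - 3*δ))) := by
  set e1 : ℝ := Real.exp ((n:ℝ) * (HXY P k - HY P k + 2*δ)) with he1
  set e2 : ℝ := Real.exp (-((l:ℝ) * (HU PU W + HV PU W k - HUV PU W k - 3*δ))) with he2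
  -- the two G factors
  set G1 : (Fin l → (∀ j, 𝓥 j)) → ℝ := fun v => ∑ u : Fin l → Bool,
    (∏ a, (PU (u a)).toReal) * ∏ a, (W (u a) (v a)).toReal with hG1
  set G2 : (Fin l → (∀ j, 𝓥 j)) → ℝ := fun v => ∑ u : Fin l → Bool,
    (∏ a, (PU (u a)).toReal) *
      (if TC PU W k l δ u (fun a => v a k) then (1:ℝ) else 0) with hG2
  have hG1nn : ∀ v, 0 ≤ G1 v := by
    intro v
    apply Finset.sum_nonneg
    intro u _
    have h1 : (0:ℝ) ≤ ∏ a, (PU (u a)).toReal :=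
      Finset.prod_nonneg (fun a _ => ENNReal.toReal_nonneg)
    have h2 : (0:ℝ) ≤ ∏ a, (W (u a) (v a)).toReal :=
      Finset.prod_nonneg (fun a _ => ENNReal.toReal_nonneg)
    positivity
  have hG1sum : ∑ v : Fin l → (∀ j, 𝓥 j), G1 v = 1 := by
    have e3 : ∀ v : Fin l → (∀ j, 𝓥 j), G1 v
        = ∏ a, (∑ b : Bool, (PU b).toReal * (W b (v a)).toReal) := by
      intro v
      rw [hG1]
      rw [← sum_pi_prod (fun (a : Fin l) (b : Bool) => (PU b).toReal * (W b (v a)).toReal)]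
      exact Finset.sum_congr rfl (fun u _ => by rw [← Finset.prod_mul_distrib])
    rw [Finset.sum_congr rfl (fun v _ => e3 v)]
    rw [sum_pi_prod (fun (a : Fin l) (vv : ∀ j, 𝓥 j) =>
      ∑ b : Bool, (PU b).toReal * (W b vv).toReal)]
    apply Finset.prod_eq_one
    intro a _
    rw [Finset.sum_comm]
    calc ∑ b : Bool, ∑ vv : (∀ j, 𝓥 j), (PU b).toReal * (W b vv).toReal
        = ∑ b : Bool, (PU b).toReal * ∑ vv : (∀ j, 𝓥 j), (W b vv).toReal := by
          exact Finset.sum_congr rfl (fun b _ => (Finset.mul_sum _ _ _).symm)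
      _ = ∑ b : Bool, (PU b).toReal := by
          exact Finset.sum_congr rfl (fun b _ => by rw [pmf_sum_one, mul_one])
      _ = 1 := pmf_sum_one PU
  have hG2le : ∀ v : Fin l → (∀ j, 𝓥 j), G2 v ≤ e2 := by
    intro v
    have hc := code_typ (pUV PU W k) (pUm PU W) (pVm PU W k)
      (fun z => ENNReal.toReal_nonneg) (margUV_U PU W k) (margUV_V PU W k)
      (HUV PU W k) (HU PU W) (HV PU W k) δ (fun a => v a k)
    rw [he2, hG2]
    refine le_trans (le_of_eq ?_) hc
    apply Finset.sum_congr rfl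
    intro u _
    congr 1
    exact Finset.prod_congr rfl (fun a _ => (pUm_eq PU W (u a)).symm)
  have hcount : ∀ ω : Fin n → Bool × (∀ j, 𝓨 j),
      ∑ x' ∈ Finset.univ.erase (fun i => (ω i).1),
        (if TS P k n δ x' (fun i => (ω i).2 k) then (1:ℝ) else 0) ≤ e1 := by
    intro ω
    have h1 : ∑ x' ∈ Finset.univ.erase (fun i => (ω i).1),
        (if TS P k n δ x' (fun i => (ω i).2 k) then (1:ℝ) else 0)
        ≤ ∑ x' : Fin n → Bool, (if TS P k n δ x' (fun i => (ω i).2 k) then (1:ℝ) else 0) := by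
      apply Finset.sum_le_sum_of_subset_of_nonneg
        (Finset.erase_subset _ _)
      intro x' _ _
      positivity
    have h2 : ∑ x' : Fin n → Bool, (if TS P k n δ x' (fun i => (ω i).2 k) then (1:ℝ) else 0)
        = ((Finset.univ.filter (fun x' : Fin n → Bool =>
            TS P k n δ x' (fun i => (ω i).2 k))).card : ℝ) := by
      rw [Finset.sum_boole]
    have h3 := count_typ (pXY P k) (pYm P k) (fun z => ENNReal.toReal_nonneg)
      (margXY P k) (HXY P k) (HY P k) δ (fun i => (ω i).2 k)
    rw [he1]
    refine le_trans h1 (le_trans (le_of_eq h2) ?_)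
    exact_mod_cast h3
  -- main chain
  have inner : ∀ ω : Fin n → Bool × (∀ j, 𝓨 j),
      ∑ c : (Fin n → Bool) → Fin l → Bool, ∑ v : Fin l → (∀ j, 𝓥 j),
        (∏ x, ∏ a, (PU (c x a)).toReal) * ((∏ i, (P (ω i)).toReal) *
          ((∏ a, (W (c (fun i => (ω i).1) a) (v a)).toReal) * i3f P PU W k n l δ c ω v))
      ≤ (∏ i, (P (ω i)).toReal) * (e1 * e2) := by
    intro ω
    have hwP : (0:ℝ) ≤ ∏ i, (P (ω i)).toReal :=
      Finset.prod_nonneg (fun i _ => ENNReal.toReal_nonneg)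
    -- expand i3f and reorganize
    have e4 : ∀ (c : (Fin n → Bool) → Fin l → Bool),
        ∑ v : Fin l → (∀ j, 𝓥 j),
          (∏ x, ∏ a, (PU (c x a)).toReal) * ((∏ i, (P (ω i)).toReal) *
            ((∏ a, (W (c (fun i => (ω i).1) a) (v a)).toReal) * i3f P PU W k n l δ c ω v))
        = ∑ x' ∈ Finset.univ.erase (fun i => (ω i).1), ∑ v : Fin l → (∀ j, 𝓥 j),
            ((∏ i, (P (ω i)).toReal) *
              (if TS P k n δ x' (fun i => (ω i).2 k) then (1:ℝ) else 0)) *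
            ((∏ x, ∏ a, (PU (c x a)).toReal) *
              ((∏ a, (W (c (fun i => (ω i).1) a) (v a)).toReal) *
                (if TC PU W k l δ (c x') (fun a => v a k) then (1:ℝ) else 0))) := by
      intro c
      rw [Finset.sum_comm]
      apply Finset.sum_congr rfl
      intro v _
      unfold i3f
      rw [Finset.mul_sum, Finset.mul_sum, Finset.mul_sum]
      apply Finset.sum_congr rfl
      intro x' _
      ring
    rw [Finset.sum_congr rfl (fun c _ => e4 c), Finset.sum_comm]
    -- now fix x', and apply pexp_pair inside
    have e5 : ∀ x' ∈ Finset.univ.erase (fun i => (ω i).1),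
        ∑ c : (Fin n → Bool) → Fin l → Bool, ∑ v : Fin l → (∀ j, 𝓥 j),
          ((∏ i, (P (ω i)).toReal) *
            (if TS P k n δ x' (fun i => (ω i).2 k) then (1:ℝ) else 0)) *
          ((∏ x, ∏ a, (PU (c x a)).toReal) *
            ((∏ a, (W (c (fun i => (ω i).1) a) (v a)).toReal) *
              (if TC PU W k l δ (c x') (fun a => v a k) then (1:ℝ) else 0)))
        = ((∏ i, (P (ω i)).toReal) *
            (if TS P k n δ x' (fun i => (ω i).2 k) then (1:ℝ) else 0)) *
          ∑ v : Fin l → (∀ j, 𝓥 j), G1 v * G2 v := by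
      intro x' hx'
      have hij : (fun i => (ω i).1) ≠ x' := Ne.symm (Finset.mem_erase.1 hx').1
      rw [Finset.sum_comm]
      rw [Finset.mul_sum]
      apply Finset.sum_congr rfl
      intro v _
      have e6 : ∑ c : (Fin n → Bool) → Fin l → Bool,
          ((∏ i, (P (ω i)).toReal) *
            (if TS P k n δ x' (fun i => (ω i).2 k) then (1:ℝ) else 0)) *
          ((∏ x, ∏ a, (PU (c x a)).toReal) *
            ((∏ a, (W (c (fun i => (ω i).1) a) (v a)).toReal) *
              (if TC PU W k l δ (c x') (fun a => v a k) then (1:ℝ) else 0)))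
          = ((∏ i, (P (ω i)).toReal) *
              (if TS P k n δ x' (fun i => (ω i).2 k) then (1:ℝ) else 0)) *
            ∑ c : (Fin n → Bool) → Fin l → Bool,
              (∏ x, (fun u : Fin l → Bool => ∏ a, (PU (u a)).toReal) (c x)) *
              ((fun u : Fin l → Bool => ∏ a, (W (u a) (v a)).toReal) (c (fun i => (ω i).1)) *
               (fun u : Fin l → Bool =>
                 (if TC PU W k l δ u (fun a => v a k) then (1:ℝ) else 0)) (c x')) := by
        rw [Finset.mul_sum]
      rw [e6, pexp_pair (ι := Fin n → Bool)
        (q := fun u : Fin l → Bool => ∏ a, (PU (u a)).toReal) (hpuseq1 PU l) hij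
        (fun u : Fin l → Bool => ∏ a, (W (u a) (v a)).toReal)
        (fun u : Fin l → Bool => (if TC PU W k l δ u (fun a => v a k) then (1:ℝ) else 0))]
    rw [Finset.sum_congr rfl e5]
    -- bound the v-sum by e2
    have e7 : ∑ v : Fin l → (∀ j, 𝓥 j), G1 v * G2 v ≤ e2 := by
      calc ∑ v : Fin l → (∀ j, 𝓥 j), G1 v * G2 v
          ≤ ∑ v : Fin l → (∀ j, 𝓥 j), G1 v * e2 := by
            apply Finset.sum_le_sum
            intro v _
            exact mul_le_mul_of_nonneg_left (hG2le v) (hG1nn v)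
        _ = e2 := by rw [← Finset.sum_mul, hG1sum, one_mul]
    calc ∑ x' ∈ Finset.univ.erase (fun i => (ω i).1),
        ((∏ i, (P (ω i)).toReal) *
          (if TS P k n δ x' (fun i => (ω i).2 k) then (1:ℝ) else 0)) *
        ∑ v : Fin l → (∀ j, 𝓥 j), G1 v * G2 v
        ≤ ∑ x' ∈ Finset.univ.erase (fun i => (ω i).1),
          ((∏ i, (P (ω i)).toReal) *
            (if TS P k n δ x' (fun i => (ω i).2 k) then (1:ℝ) else 0)) * e2 := by
          apply Finset.sum_le_sum
          intro x' _
          apply mul_le_mul_of_nonneg_left e7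
          positivity
      _ = ((∏ i, (P (ω i)).toReal) * ∑ x' ∈ Finset.univ.erase (fun i => (ω i).1),
            (if TS P k n δ x' (fun i => (ω i).2 k) then (1:ℝ) else 0)) * e2 := by
          rw [Finset.mul_sum, Finset.sum_mul]
      _ ≤ ((∏ i, (P (ω i)).toReal) * e1) * e2 := by
          apply mul_le_mul_of_nonneg_right _ (le_of_lt (Real.exp_pos _))
          exact mul_le_mul_of_nonneg_left (hcount ω) hwP
      _ = (∏ i, (P (ω i)).toReal) * (e1 * e2) := by ring
  calc ∑ c : (Fin n → Bool) → Fin l → Bool, ∑ ω : Fin n → Bool × (∀ j, 𝓨 j),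
      ∑ v : Fin l → (∀ j, 𝓥 j),
      (∏ x, ∏ a, (PU (c x a)).toReal) * ((∏ i, (P (ω i)).toReal) *
        ((∏ a, (W (c (fun i => (ω i).1) a) (v a)).toReal) * i3f P PU W k n l δ c ω v))
      = ∑ ω : Fin n → Bool × (∀ j, 𝓨 j), ∑ c : (Fin n → Bool) → Fin l → Bool,
        ∑ v : Fin l → (∀ j, 𝓥 j),
        (∏ x, ∏ a, (PU (c x a)).toReal) * ((∏ i, (P (ω i)).toReal) *
          ((∏ a, (W (c (fun i => (ω i).1) a) (v a)).toReal) * i3f P PU W k n l δ c ω v)) := by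
        rw [Finset.sum_comm]
    _ ≤ ∑ ω : Fin n → Bool × (∀ j, 𝓨 j), (∏ i, (P (ω i)).toReal) * (e1 * e2) :=
        Finset.sum_le_sum (fun ω _ => inner ω)
    _ = e1 * e2 := by rw [← Finset.sum_mul, hwP1, one_mul]

open Classical in
lemma core (hn : 0 < n) (hl : 0 < l) (hδ : 0 < δ) :
    ∑ c : (Fin n → Bool) → Fin l → Bool,
      (∏ x, ∏ a, (PU (c x a)).toReal) * bcErrProb P W c k (gdec P PU W k n l δ c)
    ≤ (Vxy P k + Vy P k) / (n * δ^2)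
      + ((Vuv PU W k + Vu PU W + Vv PU W k) / (l * δ^2)
      + Real.exp ((n:ℝ) * (HXY P k - HY P k + 2*δ))
          * Real.exp (-((l:ℝ) * (HU PU W + HV PU W k - HUV PU W k - 3*δ)))) := by
  have hPrcnn : ∀ c : (Fin n → Bool) → Fin l → Bool,
      (0:ℝ) ≤ ∏ x, ∏ a, (PU (c x a)).toReal :=
    fun c => Finset.prod_nonneg (fun x _ =>
      Finset.prod_nonneg (fun a _ => ENNReal.toReal_nonneg))
  have expand : ∑ c : (Fin n → Bool) → Fin l → Bool,
      (∏ x, ∏ a, (PU (c x a)).toReal) * bcErrProb P W c k (gdec P PU W k n l δ c)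
      = ∑ c : (Fin n → Bool) → Fin l → Bool, ∑ ω : Fin n → Bool × (∀ j, 𝓨 j),
          ∑ v : Fin l → (∀ j, 𝓥 j), (∏ x, ∏ a, (PU (c x a)).toReal) *
          (if (fun i => (ω i).1) ≠ gdec P PU W k n l δ c
              ((fun a => v a k), fun i => (ω i).2 k) then
            (∏ i, (P (ω i)).toReal) *
              ∏ a, ((W (c (fun i => (ω i).1) a)) (v a)).toReal
          else 0) := by
    apply Finset.sum_congr rfl
    intro c _
    unfold bcErrProb
    rw [Finset.mul_sum]
    apply Finset.sum_congr rfl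
    intro ω _
    rw [Finset.mul_sum]
  rw [expand]
  have hle : ∀ (c : (Fin n → Bool) → Fin l → Bool) (ω : Fin n → Bool × (∀ j, 𝓨 j))
      (v : Fin l → (∀ j, 𝓥 j)),
      (∏ x, ∏ a, (PU (c x a)).toReal) *
        (if (fun i => (ω i).1) ≠ gdec P PU W k n l δ c
            ((fun a => v a k), fun i => (ω i).2 k) then
          (∏ i, (P (ω i)).toReal) *
            ∏ a, ((W (c (fun i => (ω i).1) a)) (v a)).toReal
        else 0)
      ≤ (∏ x, ∏ a, (PU (c x a)).toReal) * ((∏ i, (P (ω i)).toReal) *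
          ((∏ a, (W (c (fun i => (ω i).1) a) (v a)).toReal) * i1f P k n δ ω))
        + ((∏ x, ∏ a, (PU (c x a)).toReal) * ((∏ i, (P (ω i)).toReal) *
          ((∏ a, (W (c (fun i => (ω i).1) a) (v a)).toReal)
            * i2f PU W k l δ (c (fun i => (ω i).1)) v))
        + (∏ x, ∏ a, (PU (c x a)).toReal) * ((∏ i, (P (ω i)).toReal) *
          ((∏ a, (W (c (fun i => (ω i).1) a) (v a)).toReal) * i3f P PU W k n l δ c ω v))) := by
    intro c ω v
    have h1 := mul_le_mul_of_nonneg_left (point_bound P PU W k n l δ c ω v) (hPrcnn c)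
    calc (∏ x, ∏ a, (PU (c x a)).toReal) * _ ≤ _ := h1
      _ = _ := by ring
  calc ∑ c : (Fin n → Bool) → Fin l → Bool, ∑ ω : Fin n → Bool × (∀ j, 𝓨 j),
      ∑ v : Fin l → (∀ j, 𝓥 j), (∏ x, ∏ a, (PU (c x a)).toReal) *
      (if (fun i => (ω i).1) ≠ gdec P PU W k n l δ c
          ((fun a => v a k), fun i => (ω i).2 k) then
        (∏ i, (P (ω i)).toReal) *
          ∏ a, ((W (c (fun i => (ω i).1) a)) (v a)).toReal
      else 0)
      ≤ ∑ c : (Fin n → Bool) → Fin l → Bool, ∑ ω : Fin n → Bool × (∀ j, 𝓨 j),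
        ∑ v : Fin l → (∀ j, 𝓥 j),
        ((∏ x, ∏ a, (PU (c x a)).toReal) * ((∏ i, (P (ω i)).toReal) *
          ((∏ a, (W (c (fun i => (ω i).1) a) (v a)).toReal) * i1f P k n δ ω))
        + ((∏ x, ∏ a, (PU (c x a)).toReal) * ((∏ i, (P (ω i)).toReal) *
          ((∏ a, (W (c (fun i => (ω i).1) a) (v a)).toReal)
            * i2f PU W k l δ (c (fun i => (ω i).1)) v))
        + (∏ x, ∏ a, (PU (c x a)).toReal) * ((∏ i, (P (ω i)).toReal) *
          ((∏ a, (W (c (fun i => (ω i).1) a) (v a)).toReal) * i3f P PU W k n l δ c ω v)))) := by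
        apply Finset.sum_le_sum
        intro c _
        apply Finset.sum_le_sum
        intro ω _
        apply Finset.sum_le_sum
        intro v _
        exact hle c ω v
    _ = (∑ c : (Fin n → Bool) → Fin l → Bool, ∑ ω : Fin n → Bool × (∀ j, 𝓨 j),
        ∑ v : Fin l → (∀ j, 𝓥 j),
        (∏ x, ∏ a, (PU (c x a)).toReal) * ((∏ i, (P (ω i)).toReal) *
          ((∏ a, (W (c (fun i => (ω i).1) a) (v a)).toReal) * i1f P k n δ ω)))
      + ((∑ c : (Fin n → Bool) → Fin l → Bool, ∑ ω : Fin n → Bool × (∀ j, 𝓨 j),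
        ∑ v : Fin l → (∀ j, 𝓥 j),
        (∏ x, ∏ a, (PU (c x a)).toReal) * ((∏ i, (P (ω i)).toReal) *
          ((∏ a, (W (c (fun i => (ω i).1) a) (v a)).toReal)
            * i2f PU W k l δ (c (fun i => (ω i).1)) v)))
      + ∑ c : (Fin n → Bool) → Fin l → Bool, ∑ ω : Fin n → Bool × (∀ j, 𝓨 j),
        ∑ v : Fin l → (∀ j, 𝓥 j),
        (∏ x, ∏ a, (PU (c x a)).toReal) * ((∏ i, (P (ω i)).toReal) *
          ((∏ a, (W (c (fun i => (ω i).1) a) (v a)).toReal) * i3f P PU W k n l δ c ω v))) := by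
        simp only [Finset.sum_add_distrib]
    _ ≤ _ := by
        refine add_le_add (coreA P PU W k n l δ hn hδ)
          (add_le_add (coreB P PU W k n l δ hl hδ) (coreC P PU W k n l δ hδ))

lemma Vxy_nonneg : 0 ≤ Vxy P k :=
  Finset.sum_nonneg (fun a _ => mul_nonneg ENNReal.toReal_nonneg (sq_nonneg _))
lemma Vy_nonneg : 0 ≤ Vy P k :=
  Finset.sum_nonneg (fun a _ => mul_nonneg ENNReal.toReal_nonneg (sq_nonneg _))
lemma Vuv_nonneg : 0 ≤ Vuv PU W k :=
  Finset.sum_nonneg (fun a _ => mul_nonneg ENNReal.toReal_nonneg (sq_nonneg _))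
lemma Vu_nonneg : 0 ≤ Vu PU W :=
  Finset.sum_nonneg (fun a _ => mul_nonneg ENNReal.toReal_nonneg (sq_nonneg _))
lemma Vv_nonneg : 0 ≤ Vv PU W k :=
  Finset.sum_nonneg (fun a _ => mul_nonneg ENNReal.toReal_nonneg (sq_nonneg _))

end Core

lemma exists_good {γ : Type} [Fintype γ] (q : γ → ℝ) (hq0 : ∀ c, 0 ≤ q c)
    (hq1 : ∑ c, q c = 1) (T : γ → ℝ) {ε : ℝ} (hε : 0 < ε)
    (hbound : ∑ c, q c * T c < ε) : ∃ c, T c < ε := by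
  by_contra h
  push_neg at h
  have h2 : ε ≤ ∑ c, q c * T c := by
    calc ε = ∑ c, q c * ε := by rw [← Finset.sum_mul, hq1, one_mul]
      _ ≤ ∑ c, q c * T c :=
        Finset.sum_le_sum (fun c _ => mul_le_mul_of_nonneg_left (h c) (hq0 c))
  linarith

lemma bcErrProb_nonneg {K : ℕ} {𝓨 𝓥 : Fin K → Type}
    [∀ k, Fintype (𝓨 k)] [∀ k, Fintype (𝓥 k)]
    (P : PMF (Bool × ∀ k, 𝓨 k)) (W : Bool → PMF (∀ k, 𝓥 k)) {n l : ℕ}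
    (f : (Fin n → Bool) → (Fin l → Bool)) (k : Fin K)
    (g : (Fin l → 𝓥 k) × (Fin n → 𝓨 k) → (Fin n → Bool)) :
    0 ≤ bcErrProb P W f k g := by
  unfold bcErrProb
  apply Finset.sum_nonneg
  intro ω _
  apply Finset.sum_nonneg
  intro v _
  split
  · have h1 : (0:ℝ) ≤ ∏ i, (P (ω i)).toReal :=
      Finset.prod_nonneg (fun i _ => ENNReal.toReal_nonneg)
    have h2 : (0:ℝ) ≤ ∏ a, ((W (f (fun i => (ω i).1) a)) (v a)).toReal :=
      Finset.prod_nonneg (fun a _ => ENNReal.toReal_nonneg)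
    positivity
  · exact le_refl 0


end SWAux

open SWAux Filter in
theorem slepian_wolf_over_broadcast_achievability
    {K : ℕ} (hK : 0 < K)
    {𝓨 𝓥 : Fin K → Type} [∀ k, Fintype (𝓨 k)] [∀ k, Fintype (𝓥 k)]
    (P : PMF (Bool × ∀ k, 𝓨 k)) (W : Bool → PMF (∀ k, 𝓥 k))
    (κ : ℝ) (hκ : 0 < κ)
    (hPU : ∃ PU : PMF Bool, ∀ k : Fin K, condH P k < κ * mutualInfo PU W k)
    {ε : ℝ} (hε : 0 < ε) :
    ∃ n l : ℕ, 0 < n ∧ 0 < l ∧ (l : ℝ) / n < κ + ε ∧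
      ∃ (f : (Fin n → Bool) → (Fin l → Bool))
        (g : ∀ k : Fin K, (Fin l → 𝓥 k) × (Fin n → 𝓨 k) → (Fin n → Bool)),
        ∀ k : Fin K, bcErrProb P W f k (g k) < ε := by
  classical
  obtain ⟨PU, hlt⟩ := hPU
  haveI : Nonempty (Fin K) := ⟨⟨0, hK⟩⟩
  have hHc0 : ∀ k : Fin K, 0 ≤ condH P k := by
    intro k
    have h1 := HY_le_HXY P k
    have h2 : condH P k = HXY P k - HY P k := rfl
    linarith
  have hIpos : ∀ k : Fin K, 0 < mutualInfo PU W k := by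
    intro k
    have h1 := hlt k
    have h2 := hHc0 k
    nlinarith
  have hgappos : ∀ k : Fin K, 0 < κ * mutualInfo PU W k - condH P k := by
    intro k
    have := hlt k
    linarith
  have h23 : (0:ℝ) < 2 + 3 * κ := by linarith
  set δ : ℝ := Finset.univ.inf' Finset.univ_nonempty
      (fun k : Fin K => min ((κ * mutualInfo PU W k - condH P k) / (2 * (2 + 3 * κ)))
        (mutualInfo PU W k / 3)) with hδdef
  have hδpos : 0 < δ := by
    rw [hδdef, Finset.lt_inf'_iff]
    intro k _
    have h1 := hgappos k
    have h2 := hIpos k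
    exact lt_min (by positivity) (by positivity)
  have hδ1 : ∀ k : Fin K, δ ≤ (κ * mutualInfo PU W k - condH P k) / (2 * (2 + 3 * κ)) :=
    fun k => le_trans (Finset.inf'_le _ (Finset.mem_univ k)) (min_le_left _ _)
  have hδ2 : ∀ k : Fin K, δ ≤ mutualInfo PU W k / 3 :=
    fun k => le_trans (Finset.inf'_le _ (Finset.mem_univ k)) (min_le_right _ _)
  -- the vanishing bound
  set B : ℕ → ℝ := fun n => ∑ k : Fin K,
    ((Vxy P k + Vy P k) / (n * δ^2)
      + ((Vuv PU W k + Vu PU W + Vv PU W k) / ((κ * n) * δ^2)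
      + Real.exp (-((n:ℝ) * ((κ * mutualInfo PU W k - condH P k) / 2))))) with hBdef
  have hBtend : Tendsto B atTop (nhds 0) := by
    rw [hBdef]
    have h0 : (0:ℝ) = ∑ _k : Fin K, ((0:ℝ) + (0 + 0)) := by simp
    rw [h0]
    apply tendsto_finset_sum
    intro k _
    apply Filter.Tendsto.add
    · have he : (fun n : ℕ => (Vxy P k + Vy P k) / (n * δ^2))
          = fun n : ℕ => ((Vxy P k + Vy P k) / δ^2) * (1 / (n:ℝ)) := by
        funext n
        rw [mul_comm ((n:ℝ)) (δ^2), ← div_div, div_eq_mul_one_div]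
      rw [he]
      simpa using tendsto_one_div_atTop_nhds_zero_nat.const_mul ((Vxy P k + Vy P k) / δ^2)
    apply Filter.Tendsto.add
    · have he : (fun n : ℕ => (Vuv PU W k + Vu PU W + Vv PU W k) / ((κ * n) * δ^2))
          = fun n : ℕ => ((Vuv PU W k + Vu PU W + Vv PU W k) / (κ * δ^2)) * (1 / (n:ℝ)) := by
        funext n
        rw [div_eq_mul_one_div, ← one_div_mul_one_div]
        ring_nf
      rw [he]
      simpa using tendsto_one_div_atTop_nhds_zero_nat.const_mul
        ((Vuv PU W k + Vu PU W + Vv PU W k) / (κ * δ^2))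
    · have he : (fun n : ℕ => Real.exp (-((n:ℝ) * ((κ * mutualInfo PU W k - condH P k) / 2))))
          = fun n : ℕ => (Real.exp (-((κ * mutualInfo PU W k - condH P k) / 2)))^n := by
        funext n
        rw [← Real.exp_nat_mul]
        congr 1
        ring
      rw [he]
      apply tendsto_pow_atTop_nhds_zero_of_lt_one (Real.exp_nonneg _)
      rw [Real.exp_lt_one_iff]
      have := hgappos k
      linarith
  have hev : ∀ᶠ n : ℕ in atTop, B n < ε := hBtend.eventually_lt_const hε
  have hev2 : ∀ᶠ n : ℕ in atTop, (⌈(1:ℝ)/ε⌉₊ + 1) ≤ n := Filter.eventually_ge_atTop _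
  obtain ⟨n, hn1, hn2⟩ := (hev.and hev2).exists
  have hnpos : 0 < n := lt_of_lt_of_le (Nat.succ_pos _) hn2
  have hnR : (0:ℝ) < n := by exact_mod_cast hnpos
  have hinv : (1:ℝ)/ε < n := by
    have h1 : (1:ℝ)/ε ≤ ⌈(1:ℝ)/ε⌉₊ := Nat.le_ceil _
    have h2 : ((⌈(1:ℝ)/ε⌉₊ : ℝ) + 1) ≤ n := by exact_mod_cast hn2
    linarith
  set l : ℕ := ⌈κ * n⌉₊ with hldef
  have hκn : (0:ℝ) < κ * n := by positivity
  have hlpos : 0 < l := Nat.ceil_pos.2 hκn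
  have hlR : (0:ℝ) < l := by exact_mod_cast hlpos
  have hlge : κ * n ≤ (l:ℝ) := Nat.le_ceil _
  have hllt : (l:ℝ) < κ * n + 1 := Nat.ceil_lt_add_one (le_of_lt hκn)
  have hln : (l:ℝ)/n < κ + ε := by
    rw [div_lt_iff₀ hnR]
    have h1 : (1:ℝ) < ε * n := by
      rw [div_lt_iff₀ hε] at hinv
      linarith [hinv]
    nlinarith
  -- per-decoder bound
  have hker : ∀ k : Fin K,
      ∑ c : (Fin n → Bool) → Fin l → Bool,
        (∏ x, ∏ a, (PU (c x a)).toReal) * bcErrProb P W c k (gdec P PU W k n l δ c)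
      ≤ (Vxy P k + Vy P k) / (n * δ^2)
        + ((Vuv PU W k + Vu PU W + Vv PU W k) / ((κ * n) * δ^2)
        + Real.exp (-((n:ℝ) * ((κ * mutualInfo PU W k - condH P k) / 2)))) := by
    intro k
    refine le_trans (core P PU W k n l δ hnpos hlpos hδpos) ?_
    apply add_le_add le_rfl
    apply add_le_add
    · apply div_le_div_of_nonneg_left
      · exact add_nonneg (add_nonneg (Vuv_nonneg PU W k) (Vu_nonneg PU W)) (Vv_nonneg PU W k)
      · positivity
      · have := sq_nonneg δ
        nlinarith [hlge]
    · rw [← Real.exp_add]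
      apply Real.exp_le_exp.2
      have hIk : condH P k = HXY P k - HY P k := rfl
      have hMk : mutualInfo PU W k = HU PU W + HV PU W k - HUV PU W k := rfl
      have hd1 := hδ1 k
      have hd2 := hδ2 k
      have hg := hgappos k
      -- l * (I - 3δ) ≥ κ n (I - 3δ) since I - 3δ ≥ 0
      have hI3 : 0 ≤ mutualInfo PU W k - 3 * δ := by linarith
      have hlI : κ * n * (mutualInfo PU W k - 3 * δ) ≤ (l:ℝ) * (mutualInfo PU W k - 3 * δ) :=
        mul_le_mul_of_nonneg_right hlge hI3
      have hδb : (2 + 3 * κ) * δ ≤ (κ * mutualInfo PU W k - condH P k) / 2 := by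
        have h5 := mul_le_mul_of_nonneg_left hd1 (le_of_lt h23)
        have h6 : (2 + 3 * κ) * ((κ * mutualInfo PU W k - condH P k) / (2 * (2 + 3 * κ)))
            = (κ * mutualInfo PU W k - condH P k) / 2 := by
          field_simp
        rw [h6] at h5
        exact h5
      nlinarith [hlI, hδb, hnR]
  -- derandomization
  set T : ((Fin n → Bool) → Fin l → Bool) → ℝ :=
    fun c => ∑ k : Fin K, bcErrProb P W c k (gdec P PU W k n l δ c) with hTdef
  have hterm : ∑ c : (Fin n → Bool) → Fin l → Bool,
      (∏ x, ∏ a, (PU (c x a)).toReal) * T c < ε := by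
    have e1 : ∑ c : (Fin n → Bool) → Fin l → Bool,
        (∏ x, ∏ a, (PU (c x a)).toReal) * T c
        = ∑ k : Fin K, ∑ c : (Fin n → Bool) → Fin l → Bool,
          (∏ x, ∏ a, (PU (c x a)).toReal) * bcErrProb P W c k (gdec P PU W k n l δ c) := by
      rw [Finset.sum_comm]
      apply Finset.sum_congr rfl
      intro c _
      rw [hTdef, Finset.mul_sum]
    rw [e1]
    calc ∑ k : Fin K, ∑ c : (Fin n → Bool) → Fin l → Bool,
        (∏ x, ∏ a, (PU (c x a)).toReal) * bcErrProb P W c k (gdec P PU W k n l δ c)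
        ≤ B n := Finset.sum_le_sum (fun k _ => hker k)
      _ < ε := hn1
  obtain ⟨c, hc⟩ := exists_good (fun c : (Fin n → Bool) → Fin l → Bool =>
      ∏ x, ∏ a, (PU (c x a)).toReal)
    (fun c => Finset.prod_nonneg (fun x _ =>
      Finset.prod_nonneg (fun a _ => ENNReal.toReal_nonneg)))
    (hPrc1 PU n l) T hε hterm
  refine ⟨n, l, hnpos, hlpos, hln, c, fun k => gdec P PU W k n l δ c, ?_⟩
  intro k
  refine lt_of_le_of_lt ?_ hc
  rw [hTdef]
  exact Finset.single_le_sum (f := fun k' : Fin K =>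
      bcErrProb P W c k' (gdec P PU W k' n l δ c))
    (fun k' _ => bcErrProb_nonneg P W c k' _) (Finset.mem_univ k)
end
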